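/- arXiv:1211.4816 — 5 statements merged into one kernel-verified Lean document; each statement's English description precedes it below -/
import Mathlib

section
/- Let h : ℕ → ℝ and Δ : ℕ → ℝ with Δ nondecreasing on positive integers and Σ_{r≥1} Δ(r)/(r(r+1)) < ∞. Suppose that h(n+m) ≤ h(n) + h(m) + Δ(n+m) for all integers n, m ≥ 1. Then the sequence (h(n)/n)_{n≥1} converges to a limit in [−∞, +∞); that is, there exists L ∈ ℝ ∪ {−∞} (an extended real with L < +∞) such that h(n)/n → L as n → ∞. -/
open Real Filter Finset

namespace HamAux

noncomputable def tl (d : ℕ → ℝ) (n : ℕ) : ℝ := ∑' r, d (r + n)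

lemma tl_sub {d : ℕ → ℝ} (hd : Summable d) {a b : ℕ} (hab : a ≤ b) :
    tl d a = (∑ i ∈ range (b - a), d (i + a)) + tl d b := by
  have h1 : Summable fun r => d (r + a) := (summable_nat_add_iff a).2 hd
  have h2 := Summable.sum_add_tsum_nat_add (f := fun r => d (r + a)) (b - a) h1
  rw [tl, ← h2, tl]
  congr 1
  refine tsum_congr fun i => ?_
  show d (i + (b - a) + a) = d (i + b)
  have e : i + (b - a) + a = i + b := by omega
  rw [e]

lemma tl_nonneg {d : ℕ → ℝ} (hd0 : ∀ j, 0 ≤ d j) (n : ℕ) : 0 ≤ tl d n :=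
  tsum_nonneg fun _ => hd0 _

lemma tl_anti {d : ℕ → ℝ} (hd : Summable d) (hd0 : ∀ j, 0 ≤ d j) {a b : ℕ} (hab : a ≤ b) :
    tl d b ≤ tl d a := by
  rw [tl_sub hd hab]
  have : 0 ≤ ∑ i ∈ range (b - a), d (i + a) := Finset.sum_nonneg fun i _ => hd0 _
  linarith

lemma tl_tendsto {d : ℕ → ℝ} (hd : Summable d) :
    Tendsto (fun n => tl d n) atTop (nhds 0) := by
  have h0 : ∀ n, tl d n = (∑' r, d r) - ∑ i ∈ range n, d i := by
    intro n
    have h2 := Summable.sum_add_tsum_nat_add (f := d) n hd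
    have h3 : tl d n = ∑' r, d (r + n) := rfl
    rw [h3]; linarith
  simp only [h0]
  have h4 := hd.hasSum.tendsto_sum_nat
  have h5 : Tendsto (fun n => (∑' r, d r) - ∑ i ∈ range n, d i) atTop
      (nhds ((∑' r, d r) - ∑' r, d r)) := tendsto_const_nhds.sub h4
  simpa using h5

/-- Telescoping estimate: `D M * (1/M - 1/N) ≤ T M - T N`. -/
lemma tele {D d : ℕ → ℝ} (hdD : ∀ j, d j = D j / (j * (j + 1)))
    (hd : Summable d) (hD0 : ∀ n, 1 ≤ n → 0 ≤ D n)
    (hDmono : ∀ m n, 1 ≤ m → m ≤ n → D m ≤ D n)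
    {M N : ℕ} (hM : 1 ≤ M) (hMN : M ≤ N) :
    D M * (((M : ℝ))⁻¹ - ((N : ℝ))⁻¹) + tl d N ≤ tl d M := by
  rw [tl_sub hd hMN]
  have key : D M * (((M : ℝ))⁻¹ - ((N : ℝ))⁻¹) ≤ ∑ i ∈ range (N - M), d (i + M) := by
    have htel : ∑ i ∈ range (N - M),
        ((((M + i : ℕ) : ℝ))⁻¹ - (((M + (i+1) : ℕ) : ℝ))⁻¹) =
        (((M : ℝ))⁻¹ - ((N : ℝ))⁻¹) := by
      have := Finset.sum_range_sub' (f := fun i => (((M + i : ℕ) : ℝ))⁻¹) (N - M)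
      simp only [Nat.add_zero] at this
      rw [show M + (N - M) = N from by omega] at this
      exact this
    rw [← htel, Finset.mul_sum]
    refine Finset.sum_le_sum fun i _ => ?_
    have hj : 1 ≤ M + i := by omega
    have hjR : (0 : ℝ) < (M + i : ℕ) := by exact_mod_cast hj
    have hcast : (((M + (i+1) : ℕ)) : ℝ) = ((M + i : ℕ) : ℝ) + 1 := by push_cast; ring
    have hinv : (((M + i : ℕ) : ℝ))⁻¹ - (((M + (i+1) : ℕ) : ℝ))⁻¹
        = (((M + i : ℕ) : ℝ) * (((M + i : ℕ) : ℝ) + 1))⁻¹ := by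
      rw [hcast, inv_sub_inv (ne_of_gt hjR) (by positivity),
        show ((M + i : ℕ) : ℝ) + 1 - ((M + i : ℕ) : ℝ) = 1 from by ring, one_div]
    rw [hinv, hdD]
    rw [show i + M = M + i from by omega]
    have hDle : D M ≤ D (M + i) := hDmono M (M + i) hM (by omega)
    have hpos : (0 : ℝ) < ((M + i : ℕ) : ℝ) * (((M + i : ℕ) : ℝ) + 1) := by positivity
    rw [div_eq_mul_inv]
    exact mul_le_mul_of_nonneg_right hDle (le_of_lt (inv_pos.2 hpos)) |>.trans
      (le_of_eq rfl)
  linarith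

/-- Core inequality used in the balanced-splitting induction (asymmetric version). -/
lemma key0 {D d : ℕ → ℝ} (hdD : ∀ j, d j = D j / (j * (j + 1)))
    (hd : Summable d) (hd0 : ∀ j, 0 ≤ d j) (hD0 : ∀ n, 1 ≤ n → 0 ≤ D n)
    (hDmono : ∀ m n, 1 ≤ m → m ≤ n → D m ≤ D n)
    (k : ℕ) {a b : ℕ} (hb : 1 ≤ b) (hba : b ≤ a) (hab2 : a ≤ 2 * b) :
    D a + D b + 8 * (a : ℝ) * (tl d k - tl d a) + 8 * (b : ℝ) * (tl d k - tl d b)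
      ≤ 8 * (((a + b : ℕ)) : ℝ) * (tl d k - tl d (a + b)) := by
  have ha : 1 ≤ a := le_trans hb hba
  set A : ℝ := (a : ℝ) with hA
  set B : ℝ := (b : ℝ) with hB
  have hA1 : (1 : ℝ) ≤ A := by rw [hA]; exact_mod_cast ha
  have hB1 : (1 : ℝ) ≤ B := by rw [hB]; exact_mod_cast hb
  have hBA : B ≤ A := by rw [hA, hB]; exact_mod_cast hba
  have hA2B : A ≤ 2 * B := by rw [hA, hB]; exact_mod_cast hab2
  have hcastS : (((a + b : ℕ)) : ℝ) = A + B := by push_cast; ring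
  set Ta := tl d a
  set Tb := tl d b
  set Ts := tl d (a + b)
  set Tk := tl d k
  have h1 : D a * (A⁻¹ - (A + B)⁻¹) + Ts ≤ Ta := by
    have := tele hdD hd hD0 hDmono ha (Nat.le_add_right a b)
    rwa [hcastS] at this
  have hA0 : (0 : ℝ) < A := by linarith
  have hS0 : (0 : ℝ) < A + B := by linarith
  have hABinv : A⁻¹ - (A + B)⁻¹ = B / (A * (A + B)) := by
    rw [inv_sub_inv (ne_of_gt hA0) (ne_of_gt hS0),
      show A + B - A = B from by ring]
  have hx : D a * B ≤ (Ta - Ts) * (A * (A + B)) := by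
    rw [hABinv] at h1
    have h1' : D a * B / (A * (A + B)) ≤ Ta - Ts := by
      rw [mul_div_assoc]; linarith
    exact (div_le_iff₀ (by positivity)).1 h1'
  have hTab : Ta ≤ Tb := tl_anti hd hd0 hba
  have hDba : D b ≤ D a := hDmono b a hb hba
  have hDa0 : 0 ≤ D a := hD0 a ha
  have hmain' : (D a + D b) * A ≤ (8 * A * (Ta - Ts) + 8 * B * (Tb - Ts)) * A := by
    have hint1 : 0 ≤ 8 * A * B * (Tb - Ta) := by
      have := sub_nonneg.2 hTab
      positivity
    have hint3 : 0 ≤ D a * (2 * B - A) := mul_nonneg hDa0 (by linarith)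
    have hint4 : 0 ≤ (D a - D b) * A := mul_nonneg (by linarith) (by linarith)
    have hint5 : 0 ≤ D a * B := mul_nonneg hDa0 (by linarith)
    nlinarith [hx, hint1, hint3, hint4, hint5]
  have hmain : D a + D b ≤ 8 * A * (Ta - Ts) + 8 * B * (Tb - Ts) :=
    le_of_mul_le_mul_right hmain' hA0
  rw [hcastS]
  nlinarith [hmain]

/-- Core inequality, symmetric version. -/
lemma key1 {D d : ℕ → ℝ} (hdD : ∀ j, d j = D j / (j * (j + 1)))
    (hd : Summable d) (hd0 : ∀ j, 0 ≤ d j) (hD0 : ∀ n, 1 ≤ n → 0 ≤ D n)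
    (hDmono : ∀ m n, 1 ≤ m → m ≤ n → D m ≤ D n)
    (k : ℕ) {a b : ℕ} (ha : 1 ≤ a) (hb : 1 ≤ b) (hab2 : a ≤ 2 * b) (hba2 : b ≤ 2 * a) :
    D a + D b + 8 * (a : ℝ) * (tl d k - tl d a) + 8 * (b : ℝ) * (tl d k - tl d b)
      ≤ 8 * (((a + b : ℕ)) : ℝ) * (tl d k - tl d (a + b)) := by
  rcases le_total b a with hle | hle
  · exact key0 hdD hd hd0 hD0 hDmono k hb hle hab2
  · have := key0 hdD hd hd0 hD0 hDmono k ha hle hba2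
    rw [Nat.add_comm b a] at this
    linarith

/-- Balanced-splitting bound for exact multiples of `k`. -/
lemma IIa {h D d : ℕ → ℝ} (hdD : ∀ j, d j = D j / (j * (j + 1)))
    (hd : Summable d) (hd0 : ∀ j, 0 ≤ d j) (hD0 : ∀ n, 1 ≤ n → 0 ≤ D n)
    (hDmono : ∀ m n, 1 ≤ m → m ≤ n → D m ≤ D n)
    (hsub : ∀ m n, 1 ≤ m → 1 ≤ n → h (m + n) ≤ h m + h n + D (m + n))
    {k : ℕ} (hk : 1 ≤ k) :
    ∀ q, 1 ≤ q → h (q * k) ≤ (q : ℝ) * h k + D (q * k)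
      + 8 * ((q * k : ℕ) : ℝ) * (tl d k - tl d (q * k)) := by
  intro q
  induction q using Nat.strong_induction_on with
  | _ q IH =>
    intro hq
    rcases eq_or_lt_of_le hq with hq1 | hq2
    · -- q = 1
      rw [← hq1]
      simp only [Nat.one_mul, Nat.cast_one, one_mul]
      have := hD0 k hk
      have h0 : tl d k - tl d k = 0 := by ring
      rw [h0]
      linarith
    · -- q ≥ 2
      obtain ⟨q1, q2, h12, hq21, h112, h1q2, hlt1, hlt2⟩ :
          ∃ q1 q2, q1 + q2 = q ∧ q2 ≤ q1 ∧ q1 ≤ 2 * q2 ∧ 1 ≤ q2 ∧ q1 < q ∧ q2 < q :=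
        ⟨(q + 1) / 2, q / 2, by omega, by omega, by omega, by omega, by omega, by omega⟩
      have h1q1 : 1 ≤ q1 := le_trans h1q2 hq21
      subst h12
      have hA := IH q1 hlt1 h1q1
      have hB := IH q2 hlt2 h1q2
      have ha1 : 1 ≤ q1 * k := Nat.mul_pos h1q1 hk
      have hb1 : 1 ≤ q2 * k := Nat.mul_pos h1q2 hk
      have hsplit := hsub (q1 * k) (q2 * k) ha1 hb1
      have hkey := key1 hdD hd hd0 hD0 hDmono k (a := q1 * k) (b := q2 * k) ha1 hb1
        (by calc q1 * k ≤ (2 * q2) * k := Nat.mul_le_mul_right k h112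
              _ = 2 * (q2 * k) := Nat.mul_assoc 2 q2 k)
        (by calc q2 * k ≤ (2 * q1) * k := Nat.mul_le_mul_right k (by omega)
              _ = 2 * (q1 * k) := Nat.mul_assoc 2 q1 k)
      have hnm : q1 * k + q2 * k = (q1 + q2) * k := (Nat.add_mul q1 q2 k).symm
      rw [hnm] at hsplit hkey
      have hc : ((q1 + q2 : ℕ) : ℝ) = (q1 : ℝ) + (q2 : ℝ) := by push_cast; ring
      rw [hc]
      linarith

/-- Balanced-splitting bound for all `n ≥ k`. -/
lemma IIb {h D d : ℕ → ℝ} (hdD : ∀ j, d j = D j / (j * (j + 1)))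
    (hd : Summable d) (hd0 : ∀ j, 0 ≤ d j) (hD0 : ∀ n, 1 ≤ n → 0 ≤ D n)
    (hDmono : ∀ m n, 1 ≤ m → m ≤ n → D m ≤ D n)
    (hsub : ∀ m n, 1 ≤ m → 1 ≤ n → h (m + n) ≤ h m + h n + D (m + n))
    {k : ℕ} (hk : 1 ≤ k) :
    ∀ n, k ≤ n → h n ≤ ((n / k : ℕ) : ℝ) * h k + (∑ s ∈ range k, |h s|) + D n
      + 8 * (n : ℝ) * (tl d k - tl d n) := by
  intro n
  induction n using Nat.strong_induction_on with
  | _ n IH =>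
    intro hkn
    have hk0 : 0 < k := hk
    set R : ℝ := ∑ s ∈ range k, |h s| with hR
    have hR0 : 0 ≤ R := Finset.sum_nonneg fun s _ => abs_nonneg _
    set q := n / k with hqdef
    set s := n % k with hsdef
    have hsk : s < k := Nat.mod_lt _ hk0
    have heq : q * k + s = n := by rw [hqdef, hsdef, Nat.mul_comm]; exact Nat.div_add_mod n k
    have hq1 : 1 ≤ q := (Nat.one_le_div_iff hk0).2 hkn
    have htl0 : 0 ≤ tl d k - tl d n := sub_nonneg.2 (tl_anti hd hd0 hkn)
    rcases Nat.eq_zero_or_pos s with hs0 | hs1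
    · -- n is an exact multiple of k
      have hn' : n = q * k := by rw [← heq, hs0, Nat.add_zero]
      have := IIa hdD hd hd0 hD0 hDmono hsub hk q hq1
      rw [← hn'] at this
      linarith
    · rcases eq_or_lt_of_le hq1 with hq1' | hq2
      · -- q = 1 : n = k + s
        have hn' : n = k + s := by
          rw [← hq1'] at heq; rw [← heq, Nat.one_mul]
        have hsplit := hsub k s hk hs1
        rw [← hn'] at hsplit
        have hDn0 : 0 ≤ D n := hD0 n (le_trans hk hkn)
        have hhs : h s ≤ R := by
          calc h s ≤ |h s| := le_abs_self _
            _ ≤ R := Finset.single_le_sum (f := fun i => |h i|)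
                (fun i _ => abs_nonneg _) (Finset.mem_range.2 hsk)
        have hq1R : ((q : ℕ) : ℝ) = 1 := by rw [← hq1']; norm_num
        rw [hq1R, one_mul]
        have hn0 : (0 : ℝ) ≤ 8 * (n : ℝ) := by positivity
        nlinarith [mul_nonneg hn0 htl0]
      · -- q ≥ 2
        obtain ⟨q1, q2, h12, hq21, h112, h1q2, hlt1, hlt2⟩ :
            ∃ q1 q2, q1 + q2 = q ∧ q2 ≤ q1 ∧ q1 ≤ 2 * q2 ∧ 1 ≤ q2 ∧ q1 < q ∧ q2 < q :=
          ⟨(q + 1) / 2, q / 2, by omega, by omega, by omega, by omega, by omega, by omega⟩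
        have h1q1 : 1 ≤ q1 := le_trans h1q2 hq21
        set a := q1 * k with hadef
        set b := q2 * k + s with hbdef
        have ha1 : 1 ≤ a := Nat.mul_pos h1q1 hk0
        have hb1 : 1 ≤ b := by omega
        have hbk : k ≤ b := by
          calc k = 1 * k := (Nat.one_mul k).symm
            _ ≤ q2 * k := Nat.mul_le_mul_right k h1q2
            _ ≤ b := Nat.le_add_right _ _
        have han : a + b = n := by
          rw [hadef, hbdef, ← Nat.add_assoc, ← Nat.add_mul, h12, heq]
        have hblt : b < n := by rw [← han]; exact Nat.lt_add_of_pos_left ha1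
        have hbq : b / k = q2 := by
          rw [hbdef, Nat.add_comm, Nat.mul_comm, Nat.add_mul_div_left _ _ hk0,
            Nat.div_eq_of_lt hsk, Nat.zero_add]
        have hA := IIa hdD hd hd0 hD0 hDmono hsub hk q1 h1q1
        have hB := IH b hblt hbk
        rw [hbq] at hB
        have hsplit := hsub a b ha1 hb1
        have hkey := key1 hdD hd hd0 hD0 hDmono k (a := a) (b := b) ha1 hb1
          (by calc a ≤ (2 * q2) * k := Nat.mul_le_mul_right k h112
                _ = 2 * (q2 * k) := Nat.mul_assoc 2 q2 k
                _ ≤ 2 * b := Nat.mul_le_mul_left 2 (Nat.le_add_right _ _))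
          (by calc b ≤ q2 * k + k := Nat.add_le_add_left (le_of_lt hsk) _
                _ = (q2 + 1) * k := (Nat.succ_mul q2 k).symm
                _ ≤ (2 * q1) * k := Nat.mul_le_mul_right k (by omega)
                _ = 2 * (q1 * k) := Nat.mul_assoc 2 q1 k)
        rw [han] at hsplit hkey
        have hc : ((q : ℕ) : ℝ) = (q1 : ℝ) + (q2 : ℝ) := by
          rw [← h12]; push_cast; ring
        rw [hc]
        linarith

/-- The final quantitative bound: for `1 ≤ k ≤ n`,
`h n ≤ n * (h k / k) + (R k + |h k|) + 10 n T(k)`. -/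
lemma star {h D d : ℕ → ℝ} (hdD : ∀ j, d j = D j / (j * (j + 1)))
    (hd : Summable d) (hd0 : ∀ j, 0 ≤ d j) (hD0 : ∀ n, 1 ≤ n → 0 ≤ D n)
    (hDmono : ∀ m n, 1 ≤ m → m ≤ n → D m ≤ D n)
    (hsub : ∀ m n, 1 ≤ m → 1 ≤ n → h (m + n) ≤ h m + h n + D (m + n))
    {k n : ℕ} (hk : 1 ≤ k) (hkn : k ≤ n) :
    h n ≤ (n : ℝ) * (h k / k) + ((∑ s ∈ range k, |h s|) + |h k|)
      + 10 * (n : ℝ) * tl d k := by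
  have hn1 : 1 ≤ n := le_trans hk hkn
  have hkR : (0 : ℝ) < k := by exact_mod_cast hk
  have hnR : (0 : ℝ) < n := by exact_mod_cast hn1
  have hIIb := IIb hdD hd hd0 hD0 hDmono hsub hk n hkn
  -- bound on the division term
  have hqk : (n / k : ℕ) * k ≤ n := Nat.div_mul_le_self n k
  have hqk2 : n < ((n / k : ℕ) + 1) * k := by
    have h1 := Nat.div_add_mod n k
    have h2 : n % k < k := Nat.mod_lt _ hk
    calc n = k * (n / k) + n % k := h1.symm
      _ < k * (n / k) + k := Nat.add_lt_add_left h2 _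
      _ = (n / k + 1) * k := by rw [Nat.succ_mul, Nat.mul_comm]
  set Q : ℝ := ((n / k : ℕ) : ℝ) with hQ
  have hQ1 : Q * k ≤ n := by rw [hQ]; exact_mod_cast hqk
  have hQ2 : (n : ℝ) < (Q + 1) * k := by
    rw [hQ]; exact_mod_cast hqk2
  have hql : Q * h k ≤ (n : ℝ) * (h k / k) + |h k| := by
    rcases le_or_gt (h k) 0 with hhk | hhk
    · have h2' : (n : ℝ) / k - 1 ≤ Q := by
        rw [div_sub' (ne_of_gt hkR), div_le_iff₀ hkR]
        nlinarith [hQ2]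
      have e1 : Q * h k ≤ ((n : ℝ) / k - 1) * h k :=
        mul_le_mul_of_nonpos_right h2' hhk
      have e2 : ((n : ℝ) / k - 1) * h k = (n : ℝ) * (h k / k) - h k := by
        field_simp
      have e3 : - h k ≤ |h k| := neg_le_abs _
      linarith
    · have h1' : Q ≤ (n : ℝ) / k := by
        rw [le_div_iff₀ hkR]; linarith
      have e1 : Q * h k ≤ ((n : ℝ) / k) * h k :=
        mul_le_mul_of_nonneg_right h1' (le_of_lt hhk)
      have e2 : ((n : ℝ) / k) * h k = (n : ℝ) * (h k / k) := by ring
      have e3 : (0:ℝ) ≤ |h k| := abs_nonneg _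
      linarith
  -- bound on D n
  have hDn : D n ≤ 2 * (n : ℝ) * tl d k := by
    have htele := tele hdD hd hD0 hDmono hn1 (Nat.le_add_right n n)
    have hcast : (((n + n : ℕ)) : ℝ) = 2 * (n : ℝ) := by push_cast; ring
    rw [hcast] at htele
    have hinv : (n : ℝ)⁻¹ - (2 * (n : ℝ))⁻¹ = (2 * (n : ℝ))⁻¹ := by
      field_simp
      norm_num
    rw [hinv] at htele
    have h2 : tl d n ≤ tl d k := tl_anti hd hd0 hkn
    have h3 : 0 ≤ tl d (n + n) := tl_nonneg hd0 _
    have h4 : D n * (2 * (n : ℝ))⁻¹ ≤ tl d k := by linarith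
    have h5 : (0:ℝ) < 2 * (n : ℝ) := by positivity
    calc D n = D n * (2 * (n : ℝ))⁻¹ * (2 * (n : ℝ)) := by field_simp
      _ ≤ tl d k * (2 * (n : ℝ)) := mul_le_mul_of_nonneg_right h4 (le_of_lt h5)
      _ = 2 * (n : ℝ) * tl d k := by ring
  have hTn : 0 ≤ tl d n := tl_nonneg hd0 _
  have hTk : 0 ≤ tl d k := tl_nonneg hd0 _
  nlinarith [hIIb, mul_nonneg (le_of_lt hnR) hTn]

lemma main {h D : ℕ → ℝ} (hD0 : ∀ n, 1 ≤ n → 0 ≤ D n)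
    (hDmono : ∀ m n, 1 ≤ m → m ≤ n → D m ≤ D n)
    (hdsum : Summable fun j : ℕ => D j / (j * (j + 1)))
    (hsub : ∀ m n, 1 ≤ m → 1 ≤ n → h (m + n) ≤ h m + h n + D (m + n)) :
    ∃ L : EReal, L < ⊤ ∧
      Tendsto (fun n : ℕ => ((h n / (n : ℝ) : ℝ) : EReal)) atTop (nhds L) := by
  set d : ℕ → ℝ := fun j => D j / (j * (j + 1)) with hddef
  have hdD : ∀ j, d j = D j / (j * (j + 1)) := fun j => rfl
  have hd : Summable d := hdsum
  have hd0 : ∀ j, 0 ≤ d j := by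
    intro j
    rcases Nat.eq_zero_or_pos j with hj | hj
    · subst hj; simp [hdD]
    · have hjR : (0:ℝ) < (j:ℝ) := by exact_mod_cast hj
      have hpos : (0:ℝ) ≤ (j:ℝ) * ((j:ℝ)+1) := by positivity
      exact div_nonneg (hD0 j hj) hpos
  set F : ℕ → EReal := fun n : ℕ => ((h n / (n : ℝ) : ℝ) : EReal) with hF
  set L : EReal := liminf F atTop with hL
  have hdiv : ∀ k n : ℕ, 1 ≤ k → k ≤ n →
      h n / n ≤ h k / k + ((∑ s ∈ range k, |h s|) + |h k|) / n + 10 * tl d k := by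
    intro k n hk hkn
    have hn0 : (0:ℝ) < n := by exact_mod_cast le_trans hk hkn
    have hs := star hdD hd hd0 hD0 hDmono hsub hk hkn
    rw [div_le_iff₀ hn0]
    have hexp : (h k / k + ((∑ s ∈ range k, |h s|) + |h k|) / n + 10 * tl d k) * n
        = n * (h k / k) + ((∑ s ∈ range k, |h s|) + |h k|) + 10 * n * tl d k := by
      field_simp
    rw [hexp]; exact hs
  set c0 : ℝ := |h 1| + ((∑ s ∈ range 1, |h s|) + |h 1|) + 10 * tl d 1 with hc0
  have hub : ∀ n : ℕ, 1 ≤ n → h n / n ≤ c0 := by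
    intro n hn
    have hn0 : (0:ℝ) < n := by exact_mod_cast hn
    have hn1 : (1:ℝ) ≤ n := by exact_mod_cast hn
    have hdn := hdiv 1 n le_rfl hn
    have hC : (0:ℝ) ≤ (∑ s ∈ range 1, |h s|) + |h 1| := by positivity
    have hdivle : ((∑ s ∈ range 1, |h s|) + |h 1|) / n ≤ (∑ s ∈ range 1, |h s|) + |h 1| := by
      rw [div_le_iff₀ hn0]; nlinarith
    have h1c : h 1 / 1 ≤ |h 1| := by rw [div_one]; exact le_abs_self _
    have hT10 : 0 ≤ tl d 1 := tl_nonneg hd0 _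
    rw [hc0]
    push_cast at hdn
    linarith
  have hFub : ∀ᶠ n in atTop, F n ≤ (c0 : EReal) := by
    filter_upwards [eventually_ge_atTop 1] with n hn
    exact EReal.coe_le_coe_iff.2 (hub n hn)
  have hLtop : L < ⊤ :=
    lt_of_le_of_lt (liminf_le_of_frequently_le' hFub.frequently) (EReal.coe_lt_top c0)
  have hmain_ev : ∀ b : ℝ, L < (b : EReal) → ∀ᶠ n in atTop, F n ≤ (b : EReal) := by
    intro b hb
    obtain ⟨b', hb'1, hb'2⟩ := EReal.exists_between_coe_real hb
    have hbb : b' < b := EReal.coe_lt_coe_iff.1 hb'2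
    set ε : ℝ := (b - b') / 2 with hε
    have hε0 : 0 < ε := by rw [hε]; linarith
    have hTev : ∀ᶠ m in atTop, tl d m < ε / 10 :=
      (tl_tendsto hd).eventually_lt_const (by linarith)
    obtain ⟨K0, hK0⟩ := eventually_atTop.1 hTev
    have hfreq : ∃ᶠ m in atTop, F m < (b' : EReal) :=
      frequently_lt_of_liminf_lt (by isBoundedDefault) hb'1
    obtain ⟨k, hkge, hFk⟩ := (frequently_atTop.1 hfreq) (max K0 1)
    have hk1 : 1 ≤ k := le_trans (le_max_right _ _) hkge
    have hkK0 : K0 ≤ k := le_trans (le_max_left _ _) hkge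
    have hhk : h k / k < b' := by
      simp only [hF] at hFk
      exact EReal.coe_lt_coe_iff.1 hFk
    set C : ℝ := (∑ s ∈ range k, |h s|) + |h k| with hC
    have hC0 : 0 ≤ C := by rw [hC]; positivity
    set N : ℕ := max k (⌈C / ε⌉₊ + 1) with hN
    rw [eventually_atTop]
    refine ⟨N, fun n hn => ?_⟩
    have hkn : k ≤ n := le_trans (le_max_left _ _) hn
    have hn1 : 1 ≤ n := le_trans hk1 hkn
    have hn0 : (0:ℝ) < n := by exact_mod_cast hn1
    have hCn : C / n ≤ ε := by
      have h1 : C / ε ≤ (⌈C / ε⌉₊ : ℝ) := Nat.le_ceil _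
      have h2 : ((⌈C / ε⌉₊ + 1 : ℕ) : ℝ) ≤ n := by
        exact_mod_cast le_trans (le_max_right k _) hn
      have h3 : C / ε < (n:ℝ) := by push_cast at h2; linarith
      rw [div_le_iff₀ hn0]
      rw [div_lt_iff₀ hε0] at h3
      nlinarith
    have hTk : tl d k < ε / 10 := hK0 k hkK0
    have hTk0 : 0 ≤ tl d k := tl_nonneg hd0 _
    have hdn := hdiv k n hk1 hkn
    rw [← hC] at hdn
    have hfin : h n / n ≤ b := by linarith
    simp only [hF]
    exact EReal.coe_le_coe_iff.2 hfin
  have hlimsup_le : limsup F atTop ≤ L := by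
    by_contra hcon
    push_neg at hcon
    obtain ⟨c, hc1, hc2⟩ := EReal.exists_between_coe_real hcon
    have := limsup_le_of_le (by isBoundedDefault) (hmain_ev c hc1)
    exact absurd hc2 (not_lt.2 this)
  refine ⟨L, hLtop, tendsto_of_liminf_eq_limsup hL.symm ?_⟩
  exact le_antisymm hlimsup_le liminf_le_limsup

end HamAux

/-- Hammersley's approximate subadditive lemma: if `h(n+m) ≤ h(n) + h(m) + Δ(n+m)` with `Δ`
nondecreasing on positive integers and `Σ_{r≥1} Δ(r)/(r(r+1)) < ∞`, then `h(n)/n` converges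
to a limit in `[−∞,+∞)`. -/
theorem hammersley_approximate_subadditive (h Δ : ℕ → ℝ)
    (hΔmono : ∀ m n : ℕ, 1 ≤ m → m ≤ n → Δ m ≤ Δ n)
    (hΔsum : Summable fun r : ℕ => Δ (r + 1) / (((r : ℝ) + 1) * ((r : ℝ) + 2)))
    (hsub : ∀ m n : ℕ, 1 ≤ m → 1 ≤ n → h (m + n) ≤ h m + h n + Δ (m + n)) :
    ∃ L : EReal, L < ⊤ ∧
      Tendsto (fun n : ℕ => ((h n / (n : ℝ) : ℝ) : EReal)) atTop (nhds L) := by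
  set C : ℝ := max 0 (-Δ 1) with hCdef
  have hC0 : 0 ≤ C := le_max_left _ _
  set D : ℕ → ℝ := fun n => Δ n + C with hDdef
  have hD0 : ∀ n, 1 ≤ n → 0 ≤ D n := by
    intro n hn
    have h1 : Δ 1 ≤ Δ n := hΔmono 1 n le_rfl hn
    have h2 : -Δ 1 ≤ C := le_max_right _ _
    simp only [hDdef]; linarith
  have hDmono : ∀ m n, 1 ≤ m → m ≤ n → D m ≤ D n := by
    intro m n hm hmn
    simp only [hDdef]
    linarith [hΔmono m n hm hmn]
  have hsum1 : Summable fun j : ℕ => Δ j / (j * ((j : ℝ) + 1)) := by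
    have h1 : Summable fun r : ℕ => Δ (r + 1) / ((r + 1 : ℕ) * (((r + 1 : ℕ) : ℝ) + 1)) := by
      refine hΔsum.congr fun r => ?_
      push_cast
      ring_nf
    exact (summable_nat_add_iff 1).1 h1
  have hbase : Summable fun j : ℕ => (((j : ℝ)) ^ 2)⁻¹ := by
    have := summable_one_div_nat_pow (p := 2) |>.2 (by norm_num)
    simpa [one_div] using this
  have hsum2 : Summable fun j : ℕ => ((j : ℝ) * ((j : ℝ) + 1))⁻¹ := by
    refine Summable.of_nonneg_of_le (fun j => by positivity) (fun j => ?_) hbase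
    rcases Nat.eq_zero_or_pos j with hj | hj
    · subst hj; norm_num
    · have hjR : (0:ℝ) < (j:ℝ) := by exact_mod_cast hj
      have hle : (j:ℝ)^2 ≤ (j:ℝ) * ((j:ℝ) + 1) := by nlinarith
      exact inv_anti₀ (by positivity) hle
  have hsum2' : Summable fun j : ℕ => C / ((j : ℝ) * ((j : ℝ) + 1)) := by
    refine (hsum2.mul_left C).congr fun j => ?_
    rw [div_eq_mul_inv]
  have hdsum : Summable fun j : ℕ => D j / (j * ((j : ℝ) + 1)) := by
    refine (hsum1.add hsum2').congr fun j => ?_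
    simp only [hDdef]
    rw [add_div]
  have hsubD : ∀ m n, 1 ≤ m → 1 ≤ n → h (m + n) ≤ h m + h n + D (m + n) := by
    intro m n hm hn
    have := hsub m n hm hn
    simp only [hDdef]
    linarith
  exact HamAux.main hD0 hDmono hdsum hsubD
end

section
/- Suppose Σ_{n≥1} |ρ(n)| < ∞. Then for every β ≥ 0 and every h ∈ ℝ, the sequence ((1/n) log Z_n(β,h))_{n≥1} converges to a finite real limit F^a(β,h) (the annealed free energy exists and is finite). -/
open Real Filter Finset
open Topology

noncomputable def annWeight (K ρ : ℕ → ℝ) (β h : ℝ) {m : ℕ} (c : Composition m) : ℝ :=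
  Real.exp ((c.length : ℝ) * (h + β ^ 2 / 2)
      + β ^ 2 * ∑ i : Fin c.length, ∑ j : Fin c.length,
          if (i : ℕ) < (j : ℕ) then
            ρ (c.sizeUpTo ((j : ℕ) + 1) - c.sizeUpTo ((i : ℕ) + 1)) else 0)
    * ∏ i : Fin c.length, K (c.blocksFun i)

/-- The annealed partition function `Z_n(β,h)`: the sum over `k ≥ 1` and tuples
`(l_1,…,l_k)` of positive integers with `l_1+⋯+l_k = n` (i.e. compositions of `n`) of
`exp(k(h+β²/2) + β² Σ_{1≤i<j≤k} ρ(τ_j − τ_i)) ∏ K(l_i)`, where `τ_i = l_1+⋯+l_i`. -/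
noncomputable def Zann (K ρ : ℕ → ℝ) (β h : ℝ) (n : ℕ) : ℝ :=
  ∑ c : Composition n, annWeight K ρ β h c

namespace AFEaux

/-! ### Concatenation of compositions -/

/-- Concatenation of two compositions. -/
def compAppend {m n : ℕ} (c1 : Composition m) (c2 : Composition n) : Composition (m + n) :=
  ⟨c1.blocks ++ c2.blocks,
   fun hi => by
      rcases List.mem_append.1 hi with h | h
      exacts [c1.blocks_pos h, c2.blocks_pos h],
   by simp [c1.blocks_sum, c2.blocks_sum]⟩

theorem length_compAppend {m n : ℕ} (c1 : Composition m) (c2 : Composition n) :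
    (compAppend c1 c2).length = c1.length + c2.length := by
  simp [compAppend, Composition.length]

theorem blocks_compAppend {m n : ℕ} (c1 : Composition m) (c2 : Composition n) :
    (compAppend c1 c2).blocks = c1.blocks ++ c2.blocks := rfl

theorem sizeUpTo_compAppend_left {m n : ℕ} (c1 : Composition m) (c2 : Composition n)
    {r : ℕ} (hr : r ≤ c1.length) :
    (compAppend c1 c2).sizeUpTo r = c1.sizeUpTo r := by
  simp only [Composition.sizeUpTo, blocks_compAppend, List.take_append]
  have : r - c1.blocks.length = 0 := Nat.sub_eq_zero_of_le hr
  simp [this]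

theorem sizeUpTo_compAppend_right {m n : ℕ} (c1 : Composition m) (c2 : Composition n)
    (s : ℕ) :
    (compAppend c1 c2).sizeUpTo (c1.length + s) = m + c2.sizeUpTo s := by
  simp only [Composition.sizeUpTo, blocks_compAppend, List.take_append]
  rw [List.take_of_length_le (by simp [Composition.length] : c1.blocks.length ≤ c1.length + s)]
  have : c1.length + s - c1.blocks.length = s := by simp [Composition.length]
  rw [this, List.sum_append, c1.blocks_sum]

theorem sizeUpTo_lt {n : ℕ} (c : Composition n) {r s : ℕ} (h : r < s) (hs : s ≤ c.length) :
    c.sizeUpTo r < c.sizeUpTo s :=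
  lt_of_lt_of_le (c.sizeUpTo_strict_mono (lt_of_lt_of_le h hs)) (c.monotone_sizeUpTo h)

theorem one_le_sizeUpTo {n : ℕ} (c : Composition n) {b : ℕ} (hb : b < c.length) :
    1 ≤ c.sizeUpTo (b + 1) := by
  have := sizeUpTo_lt c (Nat.succ_pos b) hb
  exact Nat.one_le_of_lt this

theorem sizeUpTo_succ_inj {n : ℕ} (c : Composition n) {a b : ℕ} (ha : a < c.length)
    (hb : b < c.length) (h : c.sizeUpTo (a + 1) = c.sizeUpTo (b + 1)) : a = b := by
  rcases lt_trichotomy a b with hab | hab | hab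
  · exact absurd h (ne_of_lt (sizeUpTo_lt c (by omega) hb))
  · exact hab
  · exact absurd h.symm (ne_of_lt (sizeUpTo_lt c (by omega) ha))

/-- Injectivity of concatenation: the length of the first list of positive integers is
determined. -/
theorem eq_of_prefix (L1 L2 L1' L2' : List ℕ) (h : L1 ++ L2 = L1' ++ L2')
    (hsum : L1.sum = L1'.sum) (hpos : ∀ x ∈ L1', 0 < x) (hlen : L1.length ≤ L1'.length) :
    L1.length = L1'.length := by
  have h1 : L1 = L1'.take L1.length := by
    have := congrArg (List.take L1.length) h
    rwa [List.take_append, List.take_append,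
      Nat.sub_self, Nat.sub_eq_zero_of_le hlen, List.take_zero, List.take_zero,
      List.append_nil, List.append_nil, List.take_length] at this
  have h2 := List.sum_take_add_sum_drop L1' L1.length
  rw [← h1, hsum] at h2
  have h3 : (L1'.drop L1.length).length ≤ (L1'.drop L1.length).sum :=
    List.length_le_sum_of_one_le _ (fun x hx => hpos x (List.mem_of_mem_drop hx))
  rw [List.length_drop] at h3
  omega

theorem compAppend_inj {m n : ℕ} (p q : Composition m × Composition n)
    (hEq : compAppend p.1 p.2 = compAppend q.1 q.2) : p = q := by
  obtain ⟨c1, c2⟩ := p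
  obtain ⟨d1, d2⟩ := q
  have hb : c1.blocks ++ c2.blocks = d1.blocks ++ d2.blocks := congrArg Composition.blocks hEq
  have hsum : c1.blocks.sum = d1.blocks.sum := by rw [c1.blocks_sum, d1.blocks_sum]
  have hlen : c1.blocks.length = d1.blocks.length := by
    rcases le_total c1.blocks.length d1.blocks.length with hle | hle
    · exact eq_of_prefix _ _ _ _ hb hsum (fun x hx => d1.blocks_pos hx) hle
    · exact (eq_of_prefix _ _ _ _ hb.symm hsum.symm (fun x hx => c1.blocks_pos hx) hle).symm
  obtain ⟨h1, h2⟩ := List.append_inj hb hlen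
  have e1 : c1 = d1 := by ext1; exact h1
  have e2 : c2 = d2 := by ext1; exact h2
  simp [e1, e2]

/-! ### The correlation sum -/

/-- The pair-correlation sum of a composition, as a `range` double sum. -/
noncomputable def corr (ρ : ℕ → ℝ) {m : ℕ} (c : Composition m) : ℝ :=
  ∑ i ∈ range c.length, ∑ j ∈ range c.length,
    if i < j then ρ (c.sizeUpTo (j + 1) - c.sizeUpTo (i + 1)) else 0

/-- The cross-correlation between two concatenated compositions. -/
noncomputable def cross (ρ : ℕ → ℝ) {m n : ℕ} (c1 : Composition m) (c2 : Composition n) : ℝ :=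
  ∑ a ∈ range c1.length, ∑ b ∈ range c2.length,
    ρ (m + c2.sizeUpTo (b + 1) - c1.sizeUpTo (a + 1))

theorem double_fin_sum (k : ℕ) (G : ℕ → ℕ → ℝ) :
    (∑ i : Fin k, ∑ j : Fin k, G i j) = ∑ i ∈ range k, ∑ j ∈ range k, G i j := by
  rw [← Fin.sum_univ_eq_sum_range (fun i => ∑ j ∈ range k, G i j) k]
  exact Finset.sum_congr rfl fun i _ => Fin.sum_univ_eq_sum_range (G i) k

theorem prod_blocksFun_eq (K : ℕ → ℝ) {m : ℕ} (c : Composition m) :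
    (∏ i : Fin c.length, K (c.blocksFun i)) = (c.blocks.map K).prod := by
  conv_rhs => rw [← Composition.ofFn_blocksFun c]
  rw [List.map_ofFn, List.prod_ofFn]
  rfl

theorem annWeight_eq (K ρ : ℕ → ℝ) (β h : ℝ) {m : ℕ} (c : Composition m) :
    annWeight K ρ β h c =
      Real.exp ((c.length : ℝ) * (h + β ^ 2 / 2) + β ^ 2 * corr ρ c)
        * (c.blocks.map K).prod := by
  rw [annWeight, prod_blocksFun_eq, corr,
    double_fin_sum c.length (fun i j =>
      if i < j then ρ (c.sizeUpTo (j + 1) - c.sizeUpTo (i + 1)) else 0)]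

theorem corr_compAppend (ρ : ℕ → ℝ) {m n : ℕ} (c1 : Composition m) (c2 : Composition n) :
    corr ρ (compAppend c1 c2) = corr ρ c1 + corr ρ c2 + cross ρ c1 c2 := by
  set c := compAppend c1 c2 with hc
  set k1 := c1.length
  set k2 := c2.length
  have hL : ∀ r ≤ k1, c.sizeUpTo r = c1.sizeUpTo r := fun r hr =>
    sizeUpTo_compAppend_left c1 c2 hr
  have hR : ∀ s, c.sizeUpTo (k1 + s) = m + c2.sizeUpTo s := fun s =>
    sizeUpTo_compAppend_right c1 c2 s
  rw [corr, length_compAppend]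
  rw [Finset.sum_range_add]
  have T1 : ∀ i ∈ range k1,
      (∑ j ∈ range (k1 + k2),
        if i < j then ρ (c.sizeUpTo (j + 1) - c.sizeUpTo (i + 1)) else 0)
      = (∑ j ∈ range k1, if i < j then ρ (c1.sizeUpTo (j + 1) - c1.sizeUpTo (i + 1)) else 0)
        + ∑ b ∈ range k2, ρ (m + c2.sizeUpTo (b + 1) - c1.sizeUpTo (i + 1)) := by
    intro i hi
    rw [Finset.mem_range] at hi
    rw [Finset.sum_range_add]
    congr 1
    · refine Finset.sum_congr rfl fun j hj => ?_
      rw [Finset.mem_range] at hj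
      rw [hL (j + 1) (by omega), hL (i + 1) (by omega)]
    · refine Finset.sum_congr rfl fun b hb => ?_
      rw [if_pos (by omega), show k1 + b + 1 = k1 + (b + 1) by omega, hR (b + 1),
        hL (i + 1) (by omega)]
  have T2 : ∀ a ∈ range k2,
      (∑ j ∈ range (k1 + k2),
        if k1 + a < j then ρ (c.sizeUpTo (j + 1) - c.sizeUpTo (k1 + a + 1)) else 0)
      = ∑ b ∈ range k2, if a < b then ρ (c2.sizeUpTo (b + 1) - c2.sizeUpTo (a + 1)) else 0 := by
    intro a ha
    rw [Finset.sum_range_add]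
    have Z : (∑ j ∈ range k1,
        if k1 + a < j then ρ (c.sizeUpTo (j + 1) - c.sizeUpTo (k1 + a + 1)) else 0) = 0 := by
      refine Finset.sum_eq_zero fun j hj => ?_
      rw [Finset.mem_range] at hj
      rw [if_neg (by omega)]
    rw [Z, zero_add]
    refine Finset.sum_congr rfl fun b hb => ?_
    by_cases hab : a < b
    · rw [if_pos (by omega), if_pos hab,
        show k1 + b + 1 = k1 + (b + 1) by omega, show k1 + a + 1 = k1 + (a + 1) by omega,
        hR (b + 1), hR (a + 1), Nat.add_sub_add_left]
    · rw [if_neg (by omega), if_neg hab]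
  rw [Finset.sum_congr rfl T1, Finset.sum_congr rfl T2, Finset.sum_add_distrib]
  rw [corr, corr, cross]
  ring

theorem annWeight_compAppend (K ρ : ℕ → ℝ) (β h : ℝ) {m n : ℕ}
    (c1 : Composition m) (c2 : Composition n) :
    annWeight K ρ β h (compAppend c1 c2)
      = annWeight K ρ β h c1 * annWeight K ρ β h c2 * Real.exp (β ^ 2 * cross ρ c1 c2) := by
  rw [annWeight_eq, annWeight_eq, annWeight_eq, corr_compAppend, length_compAppend,
    blocks_compAppend, List.map_append, List.prod_append]
  have e : ((c1.length + c2.length : ℕ) : ℝ) * (h + β ^ 2 / 2)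
        + β ^ 2 * (corr ρ c1 + corr ρ c2 + cross ρ c1 c2)
      = ((c1.length : ℝ) * (h + β ^ 2 / 2) + β ^ 2 * corr ρ c1)
        + ((c2.length : ℝ) * (h + β ^ 2 / 2) + β ^ 2 * corr ρ c2)
        + β ^ 2 * cross ρ c1 c2 := by push_cast; ring
  rw [e, Real.exp_add, Real.exp_add]
  ring

/-! ### Reindexing bounds -/

theorem sum_comp_le (f : ℕ → ℝ) (hf : ∀ j, 0 ≤ f j) {k N : ℕ} (g : ℕ → ℕ)
    (hg : ∀ a ∈ range k, ∀ b ∈ range k, g a = g b → a = b)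
    (hlt : ∀ a ∈ range k, g a ∈ range N) :
    ∑ a ∈ range k, f (g a) ≤ ∑ j ∈ range N, f j := by
  rw [← Finset.sum_image hg]
  refine Finset.sum_le_sum_of_subset_of_nonneg ?_ fun j _ _ => hf j
  intro j hj
  rcases Finset.mem_image.1 hj with ⟨a, ha, rfl⟩
  exact hlt a ha

theorem sum_comp_le_tsum (f : ℕ → ℝ) (hf : ∀ j, 0 ≤ f j) (hsum : Summable f)
    (s : Finset ℕ) (g : ℕ → ℕ)
    (hg : ∀ a ∈ s, ∀ b ∈ s, g a = g b → a = b) :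
    ∑ a ∈ s, f (g a) ≤ ∑' j, f j := by
  rw [← Finset.sum_image hg]
  exact Summable.sum_le_tsum _ (fun i _ => hf i) hsum

/-! ### The correction sequence -/

noncomputable def Sρ (ρ : ℕ → ℝ) : ℝ := ∑' j : ℕ, |ρ (j + 1)|

noncomputable def Rt (ρ : ℕ → ℝ) (t : ℕ) : ℝ := Sρ ρ - ∑ j ∈ range t, |ρ (j + 1)|

noncomputable def Gn (ρ : ℕ → ℝ) (n : ℕ) : ℝ := ∑ t ∈ range n, Rt ρ t

variable {ρ : ℕ → ℝ}

theorem Sρ_nonneg (ρ : ℕ → ℝ) : 0 ≤ Sρ ρ := tsum_nonneg fun _ => abs_nonneg _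

theorem Rt_nonneg (hρ : Summable fun j : ℕ => |ρ (j + 1)|) (t : ℕ) : 0 ≤ Rt ρ t :=
  sub_nonneg.2 (Summable.sum_le_tsum _ (fun i _ => abs_nonneg _) hρ)

theorem Gn_nonneg (hρ : Summable fun j : ℕ => |ρ (j + 1)|) (n : ℕ) : 0 ≤ Gn ρ n :=
  Finset.sum_nonneg fun t _ => Rt_nonneg hρ t

theorem Rt_sub (ρ : ℕ → ℝ) (m t : ℕ) :
    Rt ρ t - Rt ρ (m + t) = ∑ j ∈ range m, |ρ (t + j + 1)| := by
  rw [Rt, Rt, add_comm m t, Finset.sum_range_add]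
  ring

theorem Gn_delta (ρ : ℕ → ℝ) (m n : ℕ) :
    Gn ρ m + Gn ρ n - Gn ρ (m + n) = ∑ t ∈ range n, ∑ j ∈ range m, |ρ (t + j + 1)| := by
  have h1 : Gn ρ (m + n) = Gn ρ m + ∑ t ∈ range n, Rt ρ (m + t) := by
    rw [Gn, Finset.sum_range_add]; rfl
  have h2 : Gn ρ m + Gn ρ n - Gn ρ (m + n)
      = ∑ t ∈ range n, (Rt ρ t - Rt ρ (m + t)) := by
    rw [h1, Finset.sum_sub_distrib]; simp only [Gn]; ring
  rw [h2]
  exact Finset.sum_congr rfl fun t _ => Rt_sub ρ m t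

/-! ### Bounds on correlation sums -/

theorem abs_cross_le (hρ : Summable fun j : ℕ => |ρ (j + 1)|) {m n : ℕ}
    (c1 : Composition m) (c2 : Composition n) :
    |cross ρ c1 c2| ≤ ∑ t ∈ range n, ∑ j ∈ range m, |ρ (t + j + 1)| := by
  rw [cross]
  calc |∑ a ∈ range c1.length, ∑ b ∈ range c2.length,
          ρ (m + c2.sizeUpTo (b + 1) - c1.sizeUpTo (a + 1))|
      ≤ ∑ a ∈ range c1.length, ∑ b ∈ range c2.length,
          |ρ (m + c2.sizeUpTo (b + 1) - c1.sizeUpTo (a + 1))| :=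
        (Finset.abs_sum_le_sum_abs _ _).trans
          (Finset.sum_le_sum fun a _ => Finset.abs_sum_le_sum_abs _ _)
    _ = ∑ b ∈ range c2.length, ∑ a ∈ range c1.length,
          |ρ (m + c2.sizeUpTo (b + 1) - c1.sizeUpTo (a + 1))| := Finset.sum_comm
    _ ≤ ∑ b ∈ range c2.length, ∑ j ∈ range m, |ρ ((c2.sizeUpTo (b + 1) - 1) + j + 1)| := by
        refine Finset.sum_le_sum fun b hb => ?_
        rw [Finset.mem_range] at hb
        have h1 : 1 ≤ c2.sizeUpTo (b + 1) := one_le_sizeUpTo c2 hb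
        have e : ∀ a ∈ range c1.length,
            |ρ (m + c2.sizeUpTo (b + 1) - c1.sizeUpTo (a + 1))|
            = |ρ ((c2.sizeUpTo (b + 1) - 1) + (m - c1.sizeUpTo (a + 1)) + 1)| := by
          intro a ha
          rw [Finset.mem_range] at ha
          have hle : c1.sizeUpTo (a + 1) ≤ m := c1.sizeUpTo_le _
          have h2 : 1 ≤ c1.sizeUpTo (a + 1) := one_le_sizeUpTo c1 ha
          congr 2
          omega
        rw [Finset.sum_congr rfl e]
        refine sum_comp_le (fun j => |ρ ((c2.sizeUpTo (b + 1) - 1) + j + 1)|)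
          (fun j => abs_nonneg _) (fun a => m - c1.sizeUpTo (a + 1)) ?_ ?_
        · intro a ha a' ha' haa
          rw [Finset.mem_range] at ha ha'
          have haa' : m - c1.sizeUpTo (a + 1) = m - c1.sizeUpTo (a' + 1) := haa
          have h2 : 1 ≤ c1.sizeUpTo (a + 1) := one_le_sizeUpTo c1 ha
          have h2' : 1 ≤ c1.sizeUpTo (a' + 1) := one_le_sizeUpTo c1 ha'
          have hle : c1.sizeUpTo (a + 1) ≤ m := c1.sizeUpTo_le _
          have hle' : c1.sizeUpTo (a' + 1) ≤ m := c1.sizeUpTo_le _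
          exact sizeUpTo_succ_inj c1 ha ha' (by omega)
        · intro a ha
          rw [Finset.mem_range] at ha
          have h2 : 1 ≤ c1.sizeUpTo (a + 1) := one_le_sizeUpTo c1 ha
          have hle : c1.sizeUpTo (a + 1) ≤ m := c1.sizeUpTo_le _
          show m - c1.sizeUpTo (a + 1) ∈ range m
          rw [Finset.mem_range]
          omega
    _ ≤ ∑ t ∈ range n, ∑ j ∈ range m, |ρ (t + j + 1)| := by
        refine sum_comp_le (fun t => ∑ j ∈ range m, |ρ (t + j + 1)|)
          (fun t => Finset.sum_nonneg fun j _ => abs_nonneg _)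
          (fun b => c2.sizeUpTo (b + 1) - 1) ?_ ?_
        · intro b hb b' hb' hbb
          rw [Finset.mem_range] at hb hb'
          have hbb' : c2.sizeUpTo (b + 1) - 1 = c2.sizeUpTo (b' + 1) - 1 := hbb
          have h1 : 1 ≤ c2.sizeUpTo (b + 1) := one_le_sizeUpTo c2 hb
          have h1' : 1 ≤ c2.sizeUpTo (b' + 1) := one_le_sizeUpTo c2 hb'
          exact sizeUpTo_succ_inj c2 hb hb' (by omega)
        · intro b hb
          rw [Finset.mem_range] at hb
          have h1 : 1 ≤ c2.sizeUpTo (b + 1) := one_le_sizeUpTo c2 hb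
          have hle : c2.sizeUpTo (b + 1) ≤ n := c2.sizeUpTo_le _
          show c2.sizeUpTo (b + 1) - 1 ∈ range n
          rw [Finset.mem_range]
          omega

theorem abs_corr_le (hρ : Summable fun j : ℕ => |ρ (j + 1)|) {n : ℕ} (c : Composition n) :
    |corr ρ c| ≤ (c.length : ℝ) * Sρ ρ := by
  rw [corr]
  refine (Finset.abs_sum_le_sum_abs _ _).trans ?_
  have row : ∀ i ∈ range c.length,
      |∑ j ∈ range c.length,
        if i < j then ρ (c.sizeUpTo (j + 1) - c.sizeUpTo (i + 1)) else 0| ≤ Sρ ρ := by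
    intro i hi
    rw [Finset.mem_range] at hi
    refine (Finset.abs_sum_le_sum_abs _ _).trans ?_
    have e : ∀ j ∈ range c.length,
        |if i < j then ρ (c.sizeUpTo (j + 1) - c.sizeUpTo (i + 1)) else 0|
        = if i < j then |ρ (c.sizeUpTo (j + 1) - c.sizeUpTo (i + 1))| else 0 := by
      intro j _; split <;> simp
    rw [Finset.sum_congr rfl e, ← Finset.sum_filter]
    set s := (range c.length).filter (fun j => i < j) with hs
    have hterm : ∀ j ∈ s,
        |ρ (c.sizeUpTo (j + 1) - c.sizeUpTo (i + 1))|
        = |ρ ((c.sizeUpTo (j + 1) - c.sizeUpTo (i + 1) - 1) + 1)| := by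
      intro j hj
      simp only [hs, Finset.mem_filter, Finset.mem_range] at hj
      have : c.sizeUpTo (i + 1) < c.sizeUpTo (j + 1) :=
        sizeUpTo_lt c (by omega) (by omega)
      congr 2
      omega
    rw [Finset.sum_congr rfl hterm]
    refine sum_comp_le_tsum (fun t => |ρ (t + 1)|) (fun t => abs_nonneg _) hρ s
      (fun j => c.sizeUpTo (j + 1) - c.sizeUpTo (i + 1) - 1) ?_
    intro a ha b hb hab
    simp only [hs, Finset.mem_filter, Finset.mem_range] at ha hb
    have hab' : c.sizeUpTo (a + 1) - c.sizeUpTo (i + 1) - 1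
        = c.sizeUpTo (b + 1) - c.sizeUpTo (i + 1) - 1 := hab
    have hia : c.sizeUpTo (i + 1) < c.sizeUpTo (a + 1) := sizeUpTo_lt c (by omega) (by omega)
    have hib : c.sizeUpTo (i + 1) < c.sizeUpTo (b + 1) := sizeUpTo_lt c (by omega) (by omega)
    exact sizeUpTo_succ_inj c (by omega) (by omega) (by omega)
  calc ∑ i ∈ range c.length,
        |∑ j ∈ range c.length,
          if i < j then ρ (c.sizeUpTo (j + 1) - c.sizeUpTo (i + 1)) else 0|
      ≤ ∑ _i ∈ range c.length, Sρ ρ := Finset.sum_le_sum row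
    _ = (c.length : ℝ) * Sρ ρ := by
        rw [Finset.sum_const, Finset.card_range, nsmul_eq_mul]

/-! ### Bounds on the partition function -/

theorem annWeight_pos {K : ℕ → ℝ} (hKpos : ∀ n : ℕ, 1 ≤ n → 0 < K n)
    (ρ : ℕ → ℝ) (β h : ℝ) {n : ℕ} (c : Composition n) : 0 < annWeight K ρ β h c := by
  rw [annWeight]
  exact mul_pos (Real.exp_pos _)
    (Finset.prod_pos fun i _ => hKpos _ (c.one_le_blocksFun i))

theorem Zann_pos {K : ℕ → ℝ} (hKpos : ∀ n : ℕ, 1 ≤ n → 0 < K n)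
    (ρ : ℕ → ℝ) (β h : ℝ) (n : ℕ) : 0 < Zann K ρ β h n := by
  have : Nonempty (Composition n) := ⟨Composition.ones n⟩
  exact Finset.sum_pos (fun c _ => annWeight_pos hKpos ρ β h c) Finset.univ_nonempty

theorem annWeight_le {K : ℕ → ℝ} (hKpos : ∀ n : ℕ, 1 ≤ n → 0 < K n)
    (hKsum : HasSum (fun n : ℕ => K (n + 1)) 1)
    (hρ : Summable fun j : ℕ => |ρ (j + 1)|) (β h : ℝ) {n : ℕ} (c : Composition n) :
    annWeight K ρ β h c ≤ Real.exp ((n : ℝ) * (|h + β ^ 2 / 2| + β ^ 2 * Sρ ρ)) := by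
  rw [annWeight_eq]
  have hK1 : ∀ l : ℕ, 1 ≤ l → K l ≤ 1 := by
    intro l hl
    have := le_hasSum hKsum (l - 1) (fun j _ => (hKpos (j + 1) (by omega)).le)
    rwa [show l - 1 + 1 = l by omega] at this
  have hprod_le : (c.blocks.map K).prod ≤ 1 := by
    rw [← prod_blocksFun_eq]
    exact Finset.prod_le_one (fun i _ => (hKpos _ (c.one_le_blocksFun i)).le)
      (fun i _ => hK1 _ (c.one_le_blocksFun i))
  have hlen : (c.length : ℝ) ≤ (n : ℝ) := by exact_mod_cast c.length_le
  have hS : 0 ≤ Sρ ρ := Sρ_nonneg ρ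
  have hcorr := abs_corr_le hρ c
  have harg : (c.length : ℝ) * (h + β ^ 2 / 2) + β ^ 2 * corr ρ c
      ≤ (n : ℝ) * (|h + β ^ 2 / 2| + β ^ 2 * Sρ ρ) := by
    have t1 : (c.length : ℝ) * (h + β ^ 2 / 2) ≤ (n : ℝ) * |h + β ^ 2 / 2| :=
      le_trans (mul_le_mul_of_nonneg_left (le_abs_self _) (Nat.cast_nonneg _))
        (mul_le_mul_of_nonneg_right hlen (abs_nonneg _))
    have t2 : β ^ 2 * corr ρ c ≤ β ^ 2 * ((n : ℝ) * Sρ ρ) := by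
      refine mul_le_mul_of_nonneg_left ?_ (sq_nonneg β)
      exact le_trans (le_abs_self _) (hcorr.trans (mul_le_mul_of_nonneg_right hlen hS))
    nlinarith [t1, t2]
  calc Real.exp ((c.length : ℝ) * (h + β ^ 2 / 2) + β ^ 2 * corr ρ c) * (c.blocks.map K).prod
      ≤ Real.exp ((c.length : ℝ) * (h + β ^ 2 / 2) + β ^ 2 * corr ρ c) * 1 :=
        mul_le_mul_of_nonneg_left hprod_le (Real.exp_pos _).le
    _ = Real.exp ((c.length : ℝ) * (h + β ^ 2 / 2) + β ^ 2 * corr ρ c) := mul_one _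
    _ ≤ Real.exp ((n : ℝ) * (|h + β ^ 2 / 2| + β ^ 2 * Sρ ρ)) := Real.exp_le_exp.2 harg

theorem log_Zann_le {K : ℕ → ℝ} (hKpos : ∀ n : ℕ, 1 ≤ n → 0 < K n)
    (hKsum : HasSum (fun n : ℕ => K (n + 1)) 1)
    (hρ : Summable fun j : ℕ => |ρ (j + 1)|) (β h : ℝ) (n : ℕ) :
    Real.log (Zann K ρ β h n)
      ≤ (n : ℝ) * (Real.log 2 + (|h + β ^ 2 / 2| + β ^ 2 * Sρ ρ)) := by
  set A := |h + β ^ 2 / 2| + β ^ 2 * Sρ ρ with hA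
  have hZle : Zann K ρ β h n ≤ (2 : ℝ) ^ n * Real.exp ((n : ℝ) * A) := by
    calc Zann K ρ β h n
        ≤ (Finset.univ : Finset (Composition n)).card • Real.exp ((n : ℝ) * A) :=
          Finset.sum_le_card_nsmul _ _ _ (fun c _ => annWeight_le hKpos hKsum hρ β h c)
      _ = (Fintype.card (Composition n) : ℝ) * Real.exp ((n : ℝ) * A) := by
          rw [Finset.card_univ, nsmul_eq_mul]
      _ ≤ (2 : ℝ) ^ n * Real.exp ((n : ℝ) * A) := by
          refine mul_le_mul_of_nonneg_right ?_ (Real.exp_pos _).le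
          rw [composition_card]
          calc ((2 ^ (n - 1) : ℕ) : ℝ) = (2 : ℝ) ^ (n - 1) := by push_cast; ring
            _ ≤ (2 : ℝ) ^ n := pow_le_pow_right₀ one_le_two (Nat.sub_le n 1)
  have hlog := Real.log_le_log (Zann_pos hKpos ρ β h n) hZle
  calc Real.log (Zann K ρ β h n)
      ≤ Real.log ((2 : ℝ) ^ n * Real.exp ((n : ℝ) * A)) := hlog
    _ = (n : ℝ) * Real.log 2 + (n : ℝ) * A := by
        rw [Real.log_mul (by positivity) (Real.exp_pos _).ne', Real.log_pow, Real.log_exp]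
    _ = (n : ℝ) * (Real.log 2 + A) := by ring

/-! ### Approximate superadditivity -/

theorem Zann_superadd {K : ℕ → ℝ} (hKpos : ∀ n : ℕ, 1 ≤ n → 0 < K n)
    (hρ : Summable fun j : ℕ => |ρ (j + 1)|) (β h : ℝ) (m n : ℕ) :
    Zann K ρ β h m * Zann K ρ β h n
        * Real.exp (-(β ^ 2) * (Gn ρ m + Gn ρ n - Gn ρ (m + n)))
      ≤ Zann K ρ β h (m + n) := by
  set Δ := Gn ρ m + Gn ρ n - Gn ρ (m + n) with hΔ
  have hcross : ∀ (c1 : Composition m) (c2 : Composition n), |cross ρ c1 c2| ≤ Δ := by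
    intro c1 c2
    rw [hΔ, Gn_delta]
    exact abs_cross_le hρ c1 c2
  have step1 : Zann K ρ β h m * Zann K ρ β h n * Real.exp (-(β ^ 2) * Δ)
      = ∑ c1 : Composition m, ∑ c2 : Composition n,
          annWeight K ρ β h c1 * annWeight K ρ β h c2 * Real.exp (-(β ^ 2) * Δ) := by
    rw [Zann, Zann, Finset.sum_mul_sum, Finset.sum_mul]
    exact Finset.sum_congr rfl fun c1 _ => Finset.sum_mul _ _ _
  have step2 : (∑ c1 : Composition m, ∑ c2 : Composition n,
        annWeight K ρ β h c1 * annWeight K ρ β h c2 * Real.exp (-(β ^ 2) * Δ))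
      ≤ ∑ c1 : Composition m, ∑ c2 : Composition n,
          annWeight K ρ β h (compAppend c1 c2) := by
    refine Finset.sum_le_sum fun c1 _ => Finset.sum_le_sum fun c2 _ => ?_
    rw [annWeight_compAppend]
    refine mul_le_mul_of_nonneg_left ?_
      (mul_nonneg (annWeight_pos hKpos ρ β h c1).le (annWeight_pos hKpos ρ β h c2).le)
    rw [Real.exp_le_exp]
    have h1 : -Δ ≤ cross ρ c1 c2 := neg_le_of_abs_le (hcross c1 c2)
    nlinarith [sq_nonneg β, h1]
  have step3 : (∑ c1 : Composition m, ∑ c2 : Composition n,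
        annWeight K ρ β h (compAppend c1 c2))
      ≤ Zann K ρ β h (m + n) := by
    classical
    rw [← Fintype.sum_prod_type'
      (f := fun (c1 : Composition m) (c2 : Composition n) =>
        annWeight K ρ β h (compAppend c1 c2))]
    rw [Zann]
    rw [← Finset.sum_image (g := fun p : Composition m × Composition n => compAppend p.1 p.2)
      (fun p _ q _ hpq => compAppend_inj p q hpq)]
    exact Finset.sum_le_sum_of_subset_of_nonneg (Finset.subset_univ _)
      (fun c _ _ => (annWeight_pos hKpos ρ β h c).le)
  calc Zann K ρ β h m * Zann K ρ β h n * Real.exp (-(β ^ 2) * Δ)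
      = _ := step1
    _ ≤ _ := step2
    _ ≤ Zann K ρ β h (m + n) := step3

end AFEaux

open AFEaux in
/-- If `Σ_{n≥1} |ρ(n)| < ∞` then for every `β ≥ 0` and `h ∈ ℝ` the annealed free energy
`F^a(β,h) = lim (1/n) log Z_n(β,h)` exists and is finite. -/
theorem annealed_free_energy_exists (K ρ : ℕ → ℝ)
    (hKpos : ∀ n : ℕ, 1 ≤ n → 0 < K n)
    (hKsum : HasSum (fun n : ℕ => K (n + 1)) 1)
    (hρ : Summable fun n : ℕ => |ρ (n + 1)|) :
    ∀ β h : ℝ, 0 ≤ β →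
      ∃ Fa : ℝ, Tendsto (fun n : ℕ => (1 / (n : ℝ)) * Real.log (Zann K ρ β h n))
        atTop (nhds Fa) := by
  intro β h hβ
  set A := |h + β ^ 2 / 2| + β ^ 2 * Sρ ρ with hA
  have hA0 : 0 ≤ A :=
    add_nonneg (abs_nonneg _) (mul_nonneg (sq_nonneg β) (Sρ_nonneg ρ))
  set u : ℕ → ℝ := fun n => -Real.log (Zann K ρ β h n) + β ^ 2 * Gn ρ n with hu
  have hsub : Subadditive u := by
    intro m n
    have key := Zann_superadd hKpos hρ β h m n
    have hZm := Zann_pos hKpos ρ β h m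
    have hZn := Zann_pos hKpos ρ β h n
    have hpos : 0 < Zann K ρ β h m * Zann K ρ β h n
        * Real.exp (-(β ^ 2) * (Gn ρ m + Gn ρ n - Gn ρ (m + n))) :=
      mul_pos (mul_pos hZm hZn) (Real.exp_pos _)
    have hlog := Real.log_le_log hpos key
    rw [Real.log_mul (mul_pos hZm hZn).ne' (Real.exp_pos _).ne',
      Real.log_mul hZm.ne' hZn.ne', Real.log_exp] at hlog
    simp only [hu]
    linarith
  have hbdd : BddBelow (Set.range fun n : ℕ => u n / n) := by
    refine ⟨-(Real.log 2 + A), ?_⟩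
    rintro x ⟨n, rfl⟩
    rcases Nat.eq_zero_or_pos n with rfl | hn
    · simp only [Nat.cast_zero, div_zero]
      have : (0 : ℝ) ≤ Real.log 2 + A := by
        have := Real.log_nonneg (by norm_num : (1 : ℝ) ≤ 2)
        linarith
      linarith
    · have hnn : (0 : ℝ) < n := by exact_mod_cast hn
      rw [le_div_iff₀ hnn]
      have h1 := log_Zann_le hKpos hKsum hρ β h n
      rw [← hA] at h1
      have h2 : 0 ≤ β ^ 2 * Gn ρ n := mul_nonneg (sq_nonneg β) (Gn_nonneg hρ n)
      simp only [hu]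
      linarith
  have hfek := hsub.tendsto_lim hbdd
  have hps : Tendsto (fun t : ℕ => ∑ j ∈ range t, |ρ (j + 1)|) atTop (𝓝 (Sρ ρ)) :=
    hρ.hasSum.tendsto_sum_nat
  have hR0 : Tendsto (Rt ρ) atTop (𝓝 0) := by
    have h0 : Tendsto (fun _ : ℕ => Sρ ρ) atTop (𝓝 (Sρ ρ)) := tendsto_const_nhds
    have := h0.sub hps
    simp only [sub_self] at this; exact this
  have hG : Tendsto (fun n : ℕ => ((n : ℝ))⁻¹ * Gn ρ n) atTop (𝓝 0) := by
    have := hR0.cesaro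
    simpa [Gn] using this
  refine ⟨β ^ 2 * 0 - hsub.lim, ?_⟩
  have key : ∀ n : ℕ, (1 / (n : ℝ)) * Real.log (Zann K ρ β h n)
      = β ^ 2 * (((n : ℝ))⁻¹ * Gn ρ n) - u n / n := by
    intro n
    have hlogZ : Real.log (Zann K ρ β h n) = β ^ 2 * Gn ρ n - u n := by
      simp only [hu]; ring
    rw [hlogZ, one_div, div_eq_mul_inv]
    ring
  have T : Tendsto (fun n : ℕ => β ^ 2 * (((n : ℝ))⁻¹ * Gn ρ n) - u n / n) atTop
      (𝓝 (β ^ 2 * 0 - hsub.lim)) := (hG.const_mul (β ^ 2)).sub hfek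
  exact T.congr fun n => (key n).symm
end

section
/- Suppose Σ_{n≥1} |ρ(n)| < ∞ and set Δ_N = Σ_{k=1}^{N} Σ_{i≥k} |ρ(i)| for N ≥ 1. Then for all β ≥ 0, h ∈ ℝ and all integers n, m ≥ 1, one has Z_{n+m}(β,h) ≥ Z_n(β,h) · Z_m(β,h) · exp(−β² Δ_{n+m}). -/
open Real Filter Finset

namespace AnnSup

/-- Concatenation of compositions. -/
def combine {n m : ℕ} (c : Composition n) (d : Composition m) : Composition (n + m) :=
  ⟨c.blocks ++ d.blocks,
   fun {i} hi => by
     rcases List.mem_append.1 hi with h | h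
     exacts [c.blocks_pos h, d.blocks_pos h],
   by rw [List.sum_append, c.blocks_sum, d.blocks_sum]⟩

lemma combine_length {n m : ℕ} (c : Composition n) (d : Composition m) :
    (combine c d).length = c.length + d.length :=
  List.length_append

lemma combine_sizeUpTo_left {n m : ℕ} (c : Composition n) (d : Composition m) {i : ℕ}
    (hi : i ≤ c.length) : (combine c d).sizeUpTo i = c.sizeUpTo i := by
  simp only [Composition.sizeUpTo, combine]
  rw [List.take_append, List.sum_append,
    Nat.sub_eq_zero_of_le hi, List.take_zero, List.sum_nil, add_zero]

lemma combine_sizeUpTo_right {n m : ℕ} (c : Composition n) (d : Composition m) {i : ℕ}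
    (hi : c.length ≤ i) : (combine c d).sizeUpTo i = n + d.sizeUpTo (i - c.length) := by
  simp only [Composition.sizeUpTo, combine]
  rw [List.take_append, List.sum_append, List.take_of_length_le hi,
    c.blocks_sum]

lemma prefix_unique : ∀ (a : List ℕ) (a' b b' : List ℕ), a ++ b = a' ++ b' →
    a.sum = a'.sum → (∀ x ∈ a, 0 < x) → (∀ x ∈ a', 0 < x) → a = a'
  | [], [], _, _, _, _, _, _ => rfl
  | [], x' :: t', b, b', _, hsum, _, hpos' => by
    exfalso
    have : 0 < x' := hpos' x' (by simp)
    simp only [List.sum_nil, List.sum_cons] at hsum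
    omega
  | x :: t, [], b, b', _, hsum, hpos, _ => by
    exfalso
    have : 0 < x := hpos x (by simp)
    simp only [List.sum_nil, List.sum_cons] at hsum
    omega
  | x :: t, x' :: t', b, b', happ, hsum, hpos, hpos' => by
    simp only [List.cons_append, List.cons.injEq] at happ
    obtain ⟨rfl, happ⟩ := happ
    simp only [List.sum_cons] at hsum
    have := prefix_unique t t' b b' happ (by omega)
      (fun y hy => hpos y (by simp [hy])) (fun y hy => hpos' y (by simp [hy]))
    simp [this]

lemma combine_injective {n m : ℕ} :
    Function.Injective (fun p : Composition n × Composition m => combine p.1 p.2) := by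
  rintro ⟨c, d⟩ ⟨c', d'⟩ hcd
  have hblocks : c.blocks ++ d.blocks = c'.blocks ++ d'.blocks := congrArg Composition.blocks hcd
  have hc : c.blocks = c'.blocks := by
    refine prefix_unique _ _ _ _ hblocks (by rw [c.blocks_sum, c'.blocks_sum])
      (fun x hx => c.blocks_pos hx) (fun x hx => c'.blocks_pos hx)
  have hd : d.blocks = d'.blocks := by
    rw [hc] at hblocks
    exact List.append_cancel_left hblocks
  simp only [Prod.mk.injEq]
  exact ⟨Composition.ext hc, Composition.ext hd⟩

/-- The interaction sum, in `ℕ`-indexed form. -/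
noncomputable def S (ρ : ℕ → ℝ) {n : ℕ} (c : Composition n) : ℝ :=
  ∑ i ∈ Finset.range c.length, ∑ j ∈ Finset.range c.length,
    if i < j then ρ (c.sizeUpTo (j + 1) - c.sizeUpTo (i + 1)) else 0

/-- The product of `K` over blocks, in `ℕ`-indexed form. -/
noncomputable def P (K : ℕ → ℝ) {n : ℕ} (c : Composition n) : ℝ :=
  ∏ i ∈ Finset.range c.length, K (c.sizeUpTo (i + 1) - c.sizeUpTo i)

lemma annWeight_eq (K ρ : ℕ → ℝ) (β h : ℝ) {n : ℕ} (c : Composition n) :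
    annWeight K ρ β h c
      = Real.exp ((c.length : ℝ) * (h + β ^ 2 / 2) + β ^ 2 * S ρ c) * P K c := by
  unfold annWeight S P
  have h1 : (∑ i : Fin c.length, ∑ j : Fin c.length,
        if (i : ℕ) < (j : ℕ) then
          ρ (c.sizeUpTo ((j : ℕ) + 1) - c.sizeUpTo ((i : ℕ) + 1)) else 0)
      = ∑ i ∈ Finset.range c.length, ∑ j ∈ Finset.range c.length,
        if i < j then ρ (c.sizeUpTo (j + 1) - c.sizeUpTo (i + 1)) else 0 := by
    rw [← Fin.sum_univ_eq_sum_range (fun i => ∑ j ∈ Finset.range c.length,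
      if i < j then ρ (c.sizeUpTo (j + 1) - c.sizeUpTo (i + 1)) else 0)]
    refine Finset.sum_congr rfl fun i _ => ?_
    exact Fin.sum_univ_eq_sum_range (fun j =>
      if (i : ℕ) < j then ρ (c.sizeUpTo (j + 1) - c.sizeUpTo ((i : ℕ) + 1)) else 0) c.length
  have h2 : (∏ i : Fin c.length, K (c.blocksFun i))
      = ∏ i ∈ Finset.range c.length, K (c.sizeUpTo (i + 1) - c.sizeUpTo i) := by
    rw [← Fin.prod_univ_eq_prod_range (fun i => K (c.sizeUpTo (i + 1) - c.sizeUpTo i))]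
    refine Finset.prod_congr rfl fun i _ => ?_
    congr 1
    rw [c.sizeUpTo_succ' i]
    omega
  rw [h1, h2]

lemma P_combine (K : ℕ → ℝ) {n m : ℕ} (c : Composition n) (d : Composition m) :
    P K (combine c d) = P K c * P K d := by
  unfold P
  rw [combine_length, Finset.prod_range_add]
  congr 1
  · refine Finset.prod_congr rfl fun i hi => ?_
    rw [Finset.mem_range] at hi
    rw [combine_sizeUpTo_left c d (by omega), combine_sizeUpTo_left c d (by omega)]
  · refine Finset.prod_congr rfl fun i _ => ?_
    rw [combine_sizeUpTo_right c d (by omega), combine_sizeUpTo_right c d (by omega)]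
    congr 1
    have h1 : c.length + i + 1 - c.length = i + 1 := by omega
    have h2 : c.length + i - c.length = i := by omega
    rw [h1, h2]
    omega

/-- The cross-interaction term. -/
noncomputable def Cr (ρ : ℕ → ℝ) {n m : ℕ} (c : Composition n) (d : Composition m) : ℝ :=
  ∑ i ∈ Finset.range c.length, ∑ j ∈ Finset.range d.length,
    ρ (n + d.sizeUpTo (j + 1) - c.sizeUpTo (i + 1))

lemma S_combine (ρ : ℕ → ℝ) {n m : ℕ} (c : Composition n) (d : Composition m) :
    S ρ (combine c d) = S ρ c + S ρ d + Cr ρ c d := by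
  unfold S Cr
  rw [combine_length, Finset.sum_range_add]
  have inner : ∀ i : ℕ, ∑ j ∈ Finset.range (c.length + d.length),
      (if i < j then ρ ((combine c d).sizeUpTo (j + 1) - (combine c d).sizeUpTo (i + 1)) else 0)
      = (∑ j ∈ Finset.range c.length,
          if i < j then ρ ((combine c d).sizeUpTo (j + 1) - (combine c d).sizeUpTo (i + 1)) else 0)
        + ∑ j ∈ Finset.range d.length,
          if i < c.length + j then
            ρ ((combine c d).sizeUpTo (c.length + j + 1) - (combine c d).sizeUpTo (i + 1)) else 0 :=
    fun i => Finset.sum_range_add _ _ _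
  simp only [inner]
  rw [Finset.sum_add_distrib, Finset.sum_add_distrib]
  have e1 : ∑ i ∈ Finset.range c.length, ∑ j ∈ Finset.range c.length,
      (if i < j then ρ ((combine c d).sizeUpTo (j + 1) - (combine c d).sizeUpTo (i + 1)) else 0)
      = ∑ i ∈ Finset.range c.length, ∑ j ∈ Finset.range c.length,
        if i < j then ρ (c.sizeUpTo (j + 1) - c.sizeUpTo (i + 1)) else 0 := by
    refine Finset.sum_congr rfl fun i hi => Finset.sum_congr rfl fun j hj => ?_
    rw [Finset.mem_range] at hi hj
    rw [combine_sizeUpTo_left c d (by omega), combine_sizeUpTo_left c d (by omega)]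
  have e2 : ∑ i ∈ Finset.range c.length, ∑ j ∈ Finset.range d.length,
      (if i < c.length + j then
        ρ ((combine c d).sizeUpTo (c.length + j + 1) - (combine c d).sizeUpTo (i + 1)) else 0)
      = ∑ i ∈ Finset.range c.length, ∑ j ∈ Finset.range d.length,
        ρ (n + d.sizeUpTo (j + 1) - c.sizeUpTo (i + 1)) := by
    refine Finset.sum_congr rfl fun i hi => Finset.sum_congr rfl fun j hj => ?_
    rw [Finset.mem_range] at hi hj
    rw [if_pos (by omega), combine_sizeUpTo_right c d (by omega),
      combine_sizeUpTo_left c d (by omega)]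
    have hidx : c.length + j + 1 - c.length = j + 1 := by omega
    rw [hidx]
  have e3 : ∑ i ∈ Finset.range d.length, ∑ j ∈ Finset.range c.length,
      (if c.length + i < j then
        ρ ((combine c d).sizeUpTo (j + 1) - (combine c d).sizeUpTo (c.length + i + 1)) else 0)
      = 0 := by
    refine Finset.sum_eq_zero fun i hi => Finset.sum_eq_zero fun j hj => ?_
    rw [Finset.mem_range] at hj
    rw [if_neg (by omega)]
  have e4 : ∑ i ∈ Finset.range d.length, ∑ j ∈ Finset.range d.length,
      (if c.length + i < c.length + j then
        ρ ((combine c d).sizeUpTo (c.length + j + 1) - (combine c d).sizeUpTo (c.length + i + 1))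
        else 0)
      = ∑ i ∈ Finset.range d.length, ∑ j ∈ Finset.range d.length,
        if i < j then ρ (d.sizeUpTo (j + 1) - d.sizeUpTo (i + 1)) else 0 := by
    refine Finset.sum_congr rfl fun i hi => Finset.sum_congr rfl fun j hj => ?_
    rw [Finset.mem_range] at hi hj
    rw [combine_sizeUpTo_right c d (by omega), combine_sizeUpTo_right c d (by omega)]
    have h1 : c.length + j + 1 - c.length = j + 1 := by omega
    have h2 : c.length + i + 1 - c.length = i + 1 := by omega
    rw [h1, h2]
    by_cases hij' : i < j
    · rw [if_pos (by omega), if_pos hij']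
      congr 1
      omega
    · rw [if_neg (by omega), if_neg hij']
  rw [e1, e2, e3, e4]
  ring

lemma one_le_sizeUpTo {n : ℕ} (c : Composition n) {i : ℕ} (hi : i < c.length) :
    1 ≤ c.sizeUpTo (i + 1) := by
  have h0 : c.sizeUpTo i < c.sizeUpTo (i + 1) := c.sizeUpTo_strict_mono hi
  omega

lemma sizeUpTo_succ_strictMonoOn {n : ℕ} (c : Composition n) {i j : ℕ} (hij : i < j)
    (hj : j < c.length) : c.sizeUpTo (i + 1) < c.sizeUpTo (j + 1) :=
  lt_of_le_of_lt (c.monotone_sizeUpTo (by omega : i + 1 ≤ j)) (c.sizeUpTo_strict_mono hj)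

lemma summable_shift (ρ : ℕ → ℝ) (hρ : Summable fun n : ℕ => |ρ (n + 1)|) (k : ℕ)
    (hk : 1 ≤ k) : Summable fun i : ℕ => |ρ (k + i)| := by
  have h := hρ.comp_injective (add_right_injective (k - 1))
  have : (fun i : ℕ => |ρ (k + i)|) = (fun n : ℕ => |ρ (n + 1)|) ∘ fun i => k - 1 + i := by
    funext i
    simp only [Function.comp_apply]
    congr 2
    omega
  rw [this]
  exact h

lemma inner_bound (ρ : ℕ → ℝ) (hρ : Summable fun n : ℕ => |ρ (n + 1)|) {m : ℕ}
    (d : Composition m) (b : ℕ) :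
    ∑ j ∈ Finset.range d.length, |ρ (b + d.sizeUpTo (j + 1))| ≤ ∑' t : ℕ, |ρ (b + 1 + t)| := by
  have hF : Summable fun t : ℕ => |ρ (b + 1 + t)| := summable_shift ρ hρ (b + 1) (by omega)
  have key : ∑ j ∈ Finset.range d.length, |ρ (b + d.sizeUpTo (j + 1))|
      = ∑ t ∈ (Finset.range d.length).image (fun j => d.sizeUpTo (j + 1) - 1),
        |ρ (b + 1 + t)| := by
    rw [Finset.sum_image]
    · refine Finset.sum_congr rfl fun j hj => ?_
      rw [Finset.mem_range] at hj
      have h1 := one_le_sizeUpTo d hj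
      congr 2
      omega
    · intro j1 hj1 j2 hj2 heq
      rw [Finset.mem_coe, Finset.mem_range] at hj1 hj2
      have h1 := one_le_sizeUpTo d hj1
      have h2 := one_le_sizeUpTo d hj2
      have : d.sizeUpTo (j1 + 1) = d.sizeUpTo (j2 + 1) := by simp only at heq; omega
      by_contra hne
      rcases Nat.lt_or_ge j1 j2 with h | h
      · exact absurd this (Nat.ne_of_lt (sizeUpTo_succ_strictMonoOn d h hj2))
      · have : j2 < j1 := by omega
        exact absurd ‹d.sizeUpTo (j1 + 1) = d.sizeUpTo (j2 + 1)›.symm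
          (Nat.ne_of_lt (sizeUpTo_succ_strictMonoOn d this hj1))
  rw [key]
  exact Summable.sum_le_tsum _ (fun t _ => abs_nonneg _) hF

lemma cross_bound (ρ : ℕ → ℝ) (hρ : Summable fun n : ℕ => |ρ (n + 1)|) {n m : ℕ}
    (c : Composition n) (d : Composition m) :
    |Cr ρ c d| ≤ ∑ k ∈ Finset.Icc 1 (n + m), ∑' i : ℕ, |ρ (k + i)| := by
  unfold Cr
  calc |∑ i ∈ Finset.range c.length, ∑ j ∈ Finset.range d.length,
        ρ (n + d.sizeUpTo (j + 1) - c.sizeUpTo (i + 1))|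
      ≤ ∑ i ∈ Finset.range c.length, ∑ j ∈ Finset.range d.length,
        |ρ (n + d.sizeUpTo (j + 1) - c.sizeUpTo (i + 1))| := by
        refine (Finset.abs_sum_le_sum_abs _ _).trans ?_
        exact Finset.sum_le_sum fun i _ => Finset.abs_sum_le_sum_abs _ _
    _ ≤ ∑ i ∈ Finset.range c.length, ∑' t : ℕ, |ρ (n - c.sizeUpTo (i + 1) + 1 + t)| := by
        refine Finset.sum_le_sum fun i hi => ?_
        rw [Finset.mem_range] at hi
        have ha1 := one_le_sizeUpTo c hi
        have ha2 := c.sizeUpTo_le (i + 1)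
        have herw : ∀ j ∈ Finset.range d.length,
            |ρ (n + d.sizeUpTo (j + 1) - c.sizeUpTo (i + 1))|
            = |ρ (n - c.sizeUpTo (i + 1) + d.sizeUpTo (j + 1))| := by
          intro j _
          congr 2
          omega
        rw [Finset.sum_congr rfl herw]
        exact inner_bound ρ hρ d (n - c.sizeUpTo (i + 1))
    _ ≤ ∑ k ∈ Finset.Icc 1 (n + m), ∑' i : ℕ, |ρ (k + i)| := by
        have key : ∑ i ∈ Finset.range c.length, ∑' t : ℕ, |ρ (n - c.sizeUpTo (i + 1) + 1 + t)|
            = ∑ k ∈ (Finset.range c.length).image (fun i => n - c.sizeUpTo (i + 1) + 1),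
              ∑' t : ℕ, |ρ (k + t)| := by
          rw [Finset.sum_image]
          intro i1 hi1 i2 hi2 heq
          rw [Finset.mem_coe, Finset.mem_range] at hi1 hi2
          have h1 := one_le_sizeUpTo c hi1
          have h2 := one_le_sizeUpTo c hi2
          have h3 := c.sizeUpTo_le (i1 + 1)
          have h4 := c.sizeUpTo_le (i2 + 1)
          have heq' : c.sizeUpTo (i1 + 1) = c.sizeUpTo (i2 + 1) := by simp only at heq; omega
          by_contra hne
          rcases Nat.lt_or_ge i1 i2 with h | h
          · exact absurd heq' (Nat.ne_of_lt (sizeUpTo_succ_strictMonoOn c h hi2))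
          · have hlt : i2 < i1 := by omega
            exact absurd heq'.symm (Nat.ne_of_lt (sizeUpTo_succ_strictMonoOn c hlt hi1))
        rw [key]
        refine Finset.sum_le_sum_of_subset_of_nonneg ?_
          (fun k _ _ => tsum_nonneg fun t => abs_nonneg _)
        intro k hk
        simp only [Finset.mem_image, Finset.mem_range] at hk
        obtain ⟨i, hi, rfl⟩ := hk
        have h1 := one_le_sizeUpTo c hi
        have h2 := c.sizeUpTo_le (i + 1)
        rw [Finset.mem_Icc]
        omega

lemma P_pos (K : ℕ → ℝ) (hKpos : ∀ n : ℕ, 1 ≤ n → 0 < K n) {n : ℕ} (c : Composition n) :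
    0 < P K c := by
  unfold P
  refine Finset.prod_pos fun i hi => hKpos _ ?_
  rw [Finset.mem_range] at hi
  have := c.sizeUpTo_strict_mono hi
  omega

lemma annWeight_pos (K ρ : ℕ → ℝ) (hKpos : ∀ n : ℕ, 1 ≤ n → 0 < K n) (β h : ℝ) {n : ℕ}
    (c : Composition n) : 0 < annWeight K ρ β h c := by
  rw [annWeight_eq]
  exact mul_pos (Real.exp_pos _) (P_pos K hKpos c)

end AnnSup

/-- With `Δ_N = Σ_{k=1}^{N} Σ_{i≥k} |ρ(i)|`, the annealed partition functions satisfy the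
approximate supermultiplicativity `Z_{n+m} ≥ Z_n Z_m exp(−β² Δ_{n+m})`. -/
theorem annealed_partition_supermultiplicative (K ρ : ℕ → ℝ)
    (hKpos : ∀ n : ℕ, 1 ≤ n → 0 < K n)
    (hKsum : HasSum (fun n : ℕ => K (n + 1)) 1)
    (hρ : Summable fun n : ℕ => |ρ (n + 1)|) :
    ∀ β h : ℝ, 0 ≤ β → ∀ n m : ℕ, 1 ≤ n → 1 ≤ m →
      Zann K ρ β h n * Zann K ρ β h m *
          Real.exp (-β ^ 2 * ∑ k ∈ Finset.Icc 1 (n + m), ∑' i : ℕ, |ρ (k + i)|)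
        ≤ Zann K ρ β h (n + m) := by
  classical
  intro β h hβ n m hn hm
  set Δ : ℝ := ∑ k ∈ Finset.Icc 1 (n + m), ∑' i : ℕ, |ρ (k + i)| with hΔ
  have hβ2 : (0:ℝ) ≤ β ^ 2 := sq_nonneg β
  -- termwise inequality
  have hterm : ∀ (c : Composition n) (d : Composition m),
      annWeight K ρ β h c * annWeight K ρ β h d * Real.exp (-β ^ 2 * Δ)
        ≤ annWeight K ρ β h (AnnSup.combine c d) := by
    intro c d
    rw [AnnSup.annWeight_eq, AnnSup.annWeight_eq, AnnSup.annWeight_eq,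
      AnnSup.S_combine, AnnSup.P_combine, AnnSup.combine_length]
    have hC := AnnSup.cross_bound ρ hρ c d
    have hexp : Real.exp (-β ^ 2 * Δ) ≤ Real.exp (β ^ 2 * AnnSup.Cr ρ c d) := by
      apply Real.exp_le_exp.2
      have h1 : -Δ ≤ AnnSup.Cr ρ c d := by
        have := neg_abs_le (AnnSup.Cr ρ c d)
        linarith
      calc -β ^ 2 * Δ = β ^ 2 * (-Δ) := by ring
        _ ≤ β ^ 2 * AnnSup.Cr ρ c d := mul_le_mul_of_nonneg_left h1 hβ2
    have hPc := AnnSup.P_pos K hKpos c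
    have hPd := AnnSup.P_pos K hKpos d
    have hprod : (0:ℝ) ≤ Real.exp ((c.length : ℝ) * (h + β ^ 2 / 2) + β ^ 2 * AnnSup.S ρ c)
        * AnnSup.P K c
        * (Real.exp ((d.length : ℝ) * (h + β ^ 2 / 2) + β ^ 2 * AnnSup.S ρ d)
          * AnnSup.P K d) := by positivity
    calc Real.exp ((c.length : ℝ) * (h + β ^ 2 / 2) + β ^ 2 * AnnSup.S ρ c) * AnnSup.P K c
          * (Real.exp ((d.length : ℝ) * (h + β ^ 2 / 2) + β ^ 2 * AnnSup.S ρ d) * AnnSup.P K d)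
          * Real.exp (-β ^ 2 * Δ)
        ≤ Real.exp ((c.length : ℝ) * (h + β ^ 2 / 2) + β ^ 2 * AnnSup.S ρ c) * AnnSup.P K c
          * (Real.exp ((d.length : ℝ) * (h + β ^ 2 / 2) + β ^ 2 * AnnSup.S ρ d) * AnnSup.P K d)
          * Real.exp (β ^ 2 * AnnSup.Cr ρ c d) := by
          exact mul_le_mul_of_nonneg_left hexp hprod
      _ = Real.exp (((c.length : ℕ) + (d.length : ℕ) : ℕ) * (h + β ^ 2 / 2)
            + β ^ 2 * (AnnSup.S ρ c + AnnSup.S ρ d + AnnSup.Cr ρ c d))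
          * (AnnSup.P K c * AnnSup.P K d) := by
          rw [show Real.exp ((c.length : ℝ) * (h + β ^ 2 / 2) + β ^ 2 * AnnSup.S ρ c)
                * AnnSup.P K c
                * (Real.exp ((d.length : ℝ) * (h + β ^ 2 / 2) + β ^ 2 * AnnSup.S ρ d)
                  * AnnSup.P K d)
                * Real.exp (β ^ 2 * AnnSup.Cr ρ c d)
              = Real.exp ((c.length : ℝ) * (h + β ^ 2 / 2) + β ^ 2 * AnnSup.S ρ c)
                * Real.exp ((d.length : ℝ) * (h + β ^ 2 / 2) + β ^ 2 * AnnSup.S ρ d)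
                * Real.exp (β ^ 2 * AnnSup.Cr ρ c d)
                * (AnnSup.P K c * AnnSup.P K d) from by ring,
            ← Real.exp_add, ← Real.exp_add]
          congr 2
          push_cast
          ring
  -- summing up
  have hinj := @AnnSup.combine_injective n m
  have hsum1 : Zann K ρ β h n * Zann K ρ β h m * Real.exp (-β ^ 2 * Δ)
      = ∑ p : Composition n × Composition m,
          annWeight K ρ β h p.1 * annWeight K ρ β h p.2 * Real.exp (-β ^ 2 * Δ) := by
    rw [← Finset.sum_mul]
    congr 1
    rw [Zann, Zann, Finset.sum_mul_sum]
    rw [← Finset.sum_product']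
    rfl
  rw [hsum1]
  calc ∑ p : Composition n × Composition m,
        annWeight K ρ β h p.1 * annWeight K ρ β h p.2 * Real.exp (-β ^ 2 * Δ)
      ≤ ∑ p : Composition n × Composition m,
        annWeight K ρ β h (AnnSup.combine p.1 p.2) :=
        Finset.sum_le_sum fun p _ => hterm p.1 p.2
    _ = ∑ e ∈ Finset.univ.image
          (fun p : Composition n × Composition m => AnnSup.combine p.1 p.2),
        annWeight K ρ β h e := by
        rw [Finset.sum_image fun p _ q _ hpq => hinj hpq]
    _ ≤ ∑ e : Composition (n + m), annWeight K ρ β h e :=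
        Finset.sum_le_sum_of_subset_of_nonneg (Finset.subset_univ _)
          (fun e _ _ => (AnnSup.annWeight_pos K ρ hKpos β h e).le)
    _ = Zann K ρ β h (n + m) := rfl
end

section
/- Let φ : Σ → ℝ be a potential with Σ_{n≥1} V_n(φ) < ∞ and sup_{x∈Σ} Σ_{s≥1} e^{φ(sx)} < ∞. Then for every a ∈ ℤ≥1 the limit P_G(φ) := lim_{n→∞} (1/n) log Z_n(φ,a) exists, is a finite real number, does not depend on a, and satisfies P_G(φ) ≤ log ( sup_{x∈Σ} Σ_{s≥1} e^{φ(sx)} ). -/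
open Real Filter Finset

/-- The space `Σ = (ℤ≥1)^ℕ` of sequences of positive integers. -/
abbrev SSeq : Type := ℕ → ℕ+

/-- The left shift `T` on `Σ`. -/
def shift (x : SSeq) : SSeq := fun i => x (i + 1)

/-- Concatenation `sx = (s, x_0, x_1, …)`. -/
def consSeq (s : ℕ+) (x : SSeq) : SSeq := fun i => match i with
  | 0 => s
  | j + 1 => x j

/-- The Birkhoff sum `φ_n = Σ_{k=0}^{n−1} φ∘T^k`. -/
noncomputable def birkhoff (φ : SSeq → ℝ) (n : ℕ) (x : SSeq) : ℝ :=
  ∑ k ∈ Finset.range n, φ (shift^[k] x)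

/-- The set of variations `{|φ(x) − φ(y)| : x_i = y_i for all i < n}`. -/
def varSet (φ : SSeq → ℝ) (n : ℕ) : Set ℝ :=
  {d | ∃ x y : SSeq, (∀ i < n, x i = y i) ∧ d = |φ x - φ y|}

/-- The `n`-th variation `V_n(φ)`. -/
noncomputable def Vn (φ : SSeq → ℝ) (n : ℕ) : ℝ := sSup (varSet φ n)

open scoped ENNReal in
/-- `Z_n(φ,a) = Σ_{x : T^n x = x, x_0 = a} e^{φ_n(x)}`, valued in `[0,∞]`. -/
noncomputable def Zg (φ : SSeq → ℝ) (a : ℕ+) (n : ℕ) : ℝ≥0∞ :=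
  ∑' x : {x : SSeq // shift^[n] x = x ∧ x 0 = a}, ENNReal.ofReal (Real.exp (birkhoff φ n x))

/-- `P` is the Gurevich pressure of `φ`: for every `a`,
`(1/n) log Z_n(φ,a) → P`. -/
def IsGurevich (φ : SSeq → ℝ) (P : ℝ) : Prop :=
  ∀ a : ℕ+, Tendsto (fun n : ℕ => (1 / (n : ℝ)) * Real.log (Zg φ a n).toReal) atTop (nhds P)

open scoped ENNReal in
/-- `sup_{x∈Σ} Σ_{s≥1} e^{φ(sx)}`, valued in `[0,∞]`. -/
noncomputable def opNorm (φ : SSeq → ℝ) : ℝ≥0∞ :=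
  ⨆ x : SSeq, ∑' s : ℕ+, ENNReal.ofReal (Real.exp (φ (consSeq s x)))

open Real Filter Finset
open scoped ENNReal

section Aux
variable {φ : SSeq → ℝ}

lemma shift_iterate (k : ℕ) (x : SSeq) (i : ℕ) : (shift^[k] x) i = x (i + k) := by
  induction k generalizing x i with
  | zero => rfl
  | succ k ih =>
      rw [Function.iterate_succ_apply, ih]
      simp [shift, Nat.add_assoc, Nat.add_comm 1 k]

lemma birkhoff_succ (φ : SSeq → ℝ) (n : ℕ) (x : SSeq) :
    birkhoff φ (n + 1) x = birkhoff φ n x + φ (shift^[n] x) := by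
  unfold birkhoff
  rw [Finset.sum_range_succ]

lemma birkhoff_add (φ : SSeq → ℝ) (m n : ℕ) (x : SSeq) :
    birkhoff φ (m + n) x = birkhoff φ m x + birkhoff φ n (shift^[m] x) := by
  induction n with
  | zero => simp [birkhoff]
  | succ n ih =>
      rw [← Nat.add_assoc, birkhoff_succ, ih, birkhoff_succ, add_assoc,
        Function.iterate_add_apply]
      rw [← Function.Commute.iterate_iterate_self shift m n x]

lemma zero_mem_varSet (n : ℕ) : (0:ℝ) ∈ varSet φ n :=
  ⟨fun _ => 1, fun _ => 1, fun _ _ => rfl, by simp⟩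

lemma Vn_nonneg (hbdd : ∀ n : ℕ, 1 ≤ n → BddAbove (varSet φ n)) {n : ℕ} (hn : 1 ≤ n) :
    0 ≤ Vn φ n := le_csSup (hbdd n hn) (zero_mem_varSet n)

lemma abs_sub_le_Vn (hbdd : ∀ n : ℕ, 1 ≤ n → BddAbove (varSet φ n)) {n : ℕ} (hn : 1 ≤ n)
    {x y : SSeq} (h : ∀ i < n, x i = y i) : |φ x - φ y| ≤ Vn φ n :=
  le_csSup (hbdd n hn) ⟨x, y, h, rfl⟩

end Aux

section Aux2
variable {φ : SSeq → ℝ}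

lemma abs_birkhoff_sub_le (hbdd : ∀ n : ℕ, 1 ≤ n → BddAbove (varSet φ n))
    (hsum : Summable fun n : ℕ => Vn φ (n + 1))
    (n : ℕ) {x y : SSeq} (h : ∀ i < n, x i = y i) :
    |birkhoff φ n x - birkhoff φ n y| ≤ ∑' k : ℕ, Vn φ (k + 1) := by
  have key : |birkhoff φ n x - birkhoff φ n y| ≤ ∑ k ∈ Finset.range n, Vn φ (k + 1) := by
    unfold birkhoff
    rw [← Finset.sum_sub_distrib]
    refine (Finset.abs_sum_le_sum_abs _ _).trans ?_
    rw [← Finset.sum_range_reflect (fun k => Vn φ (k + 1)) n]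
    refine Finset.sum_le_sum fun k hk => ?_
    rw [Finset.mem_range] at hk
    have h1 : n - 1 - k + 1 = n - k := by omega
    rw [h1]
    refine abs_sub_le_Vn hbdd (by omega) fun i hi => ?_
    rw [shift_iterate, shift_iterate]
    exact h (i + k) (by omega)
  exact key.trans (Summable.sum_le_tsum _ (fun i _ => Vn_nonneg hbdd (by omega)) hsum)

lemma B_nonneg (hbdd : ∀ n : ℕ, 1 ≤ n → BddAbove (varSet φ n)) :
    0 ≤ ∑' k : ℕ, Vn φ (k + 1) :=
  tsum_nonneg fun k => Vn_nonneg hbdd (by omega)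

end Aux2

section Upper
variable {φ : SSeq → ℝ}

/-- Word followed by tail. -/
def app (n : ℕ) (w : Fin n → ℕ+) (z : SSeq) : SSeq :=
  fun i => if h : i < n then w ⟨i, h⟩ else z (i - n)

lemma shift_iterate_app (n : ℕ) (w : Fin n → ℕ+) (z : SSeq) :
    shift^[n] (app n w z) = z := by
  funext i
  rw [shift_iterate]
  simp [app]

lemma app_succ (n : ℕ) (w : Fin (n + 1) → ℕ+) (z : SSeq) :
    app (n + 1) w z = app n (fun i => w i.castSucc) (consSeq (w (Fin.last n)) z) := by
  funext i
  rcases lt_trichotomy i n with h | h | h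
  · simp [app, h, h.trans (Nat.lt_succ_self n), Fin.castSucc]
  · subst h
    have h2 : ¬ i < i := lt_irrefl i
    simp [app, Nat.lt_succ_self i, h2, Fin.last, consSeq]
  · have h1 : ¬ i < n + 1 := by omega
    have h2 : ¬ i < n := by omega
    have h3 : i - n = (i - (n + 1)) + 1 := by omega
    simp [app, h1, h2, h3, consSeq]

noncomputable def U (φ : SSeq → ℝ) (n : ℕ) (z : SSeq) : ℝ≥0∞ :=
  ∑' w : Fin n → ℕ+, ENNReal.ofReal (Real.exp (birkhoff φ n (app n w z)))

lemma tsum_cons_le (z : SSeq) :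
    ∑' s : ℕ+, ENNReal.ofReal (Real.exp (φ (consSeq s z))) ≤ opNorm φ :=
  le_iSup (fun x => ∑' s : ℕ+, ENNReal.ofReal (Real.exp (φ (consSeq s x)))) z

lemma U_le (n : ℕ) (z : SSeq) : U φ n z ≤ (opNorm φ) ^ n := by
  induction n generalizing z with
  | zero =>
      have : U φ 0 z = 1 := by
        unfold U
        rw [tsum_eq_single (default : Fin 0 → ℕ+)
          (fun b hb => absurd (Subsingleton.elim b default) hb)]
        simp [birkhoff]
      simp [this]
  | succ n ih =>
      have key : U φ (n + 1) z ≤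
          ∑' p : ℕ+ × (Fin n → ℕ+), ENNReal.ofReal
            (Real.exp (birkhoff φ (n + 1) (app n p.2 (consSeq p.1 z)))) := by
        unfold U
        have hinj : Function.Injective
            (fun w : Fin (n + 1) → ℕ+ => ((w (Fin.last n), fun i => w i.castSucc) :
              ℕ+ × (Fin n → ℕ+))) := by
          intro w w' h
          rw [Prod.mk.injEq] at h
          funext j
          induction j using Fin.lastCases with
          | last => exact h.1
          | cast i => exact congrFun h.2 i
        calc ∑' w : Fin (n+1) → ℕ+, ENNReal.ofReal (Real.exp (birkhoff φ (n+1) (app (n+1) w z)))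
            = ∑' w : Fin (n+1) → ℕ+, ENNReal.ofReal
              (Real.exp (birkhoff φ (n+1) (app n (fun i => w i.castSucc)
                (consSeq (w (Fin.last n)) z)))) := by
              congr 1; funext w; rw [app_succ]
          _ ≤ _ := ENNReal.tsum_comp_le_tsum_of_injective hinj _
      refine key.trans ?_
      rw [show (∑' p : ℕ+ × (Fin n → ℕ+), ENNReal.ofReal
        (Real.exp (birkhoff φ (n + 1) (app n p.2 (consSeq p.1 z))))) =
        ∑' (s : ℕ+) (w : Fin n → ℕ+), ENNReal.ofReal
        (Real.exp (birkhoff φ (n + 1) (app n w (consSeq s z)))) from ENNReal.tsum_prod (f := fun s w => ENNReal.ofReal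
        (Real.exp (birkhoff φ (n + 1) (app n w (consSeq s z)))))]
      have step : ∀ s : ℕ+,
          (∑' w : Fin n → ℕ+, ENNReal.ofReal
            (Real.exp (birkhoff φ (n + 1) (app n w (consSeq s z)))))
          ≤ ENNReal.ofReal (Real.exp (φ (consSeq s z))) * (opNorm φ) ^ n := by
        intro s
        have : ∀ w : Fin n → ℕ+,
            ENNReal.ofReal (Real.exp (birkhoff φ (n + 1) (app n w (consSeq s z))))
            = ENNReal.ofReal (Real.exp (φ (consSeq s z))) *
              ENNReal.ofReal (Real.exp (birkhoff φ n (app n w (consSeq s z)))) := by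
          intro w
          rw [birkhoff_succ, shift_iterate_app, Real.exp_add,
            ENNReal.ofReal_mul (Real.exp_nonneg _), mul_comm]
        rw [tsum_congr this, ENNReal.tsum_mul_left]
        exact mul_le_mul_right (ih (consSeq s z)) _
      calc ∑' (s : ℕ+) (w : Fin n → ℕ+), ENNReal.ofReal
            (Real.exp (birkhoff φ (n + 1) (app n w (consSeq s z))))
          ≤ ∑' s : ℕ+, ENNReal.ofReal (Real.exp (φ (consSeq s z))) * (opNorm φ) ^ n :=
            ENNReal.tsum_le_tsum step
        _ = (∑' s : ℕ+, ENNReal.ofReal (Real.exp (φ (consSeq s z)))) * (opNorm φ) ^ n :=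
            ENNReal.tsum_mul_right
        _ ≤ (opNorm φ) * (opNorm φ) ^ n := mul_le_mul_left (tsum_cons_le z) _
        _ = (opNorm φ) ^ (n + 1) := (pow_succ' _ _).symm

end Upper

section Periodic
variable {φ : SSeq → ℝ}

lemma periodic_apply_add {x : SSeq} {n : ℕ} (hx : shift^[n] x = x) (i : ℕ) :
    x (i + n) = x i := by
  conv_rhs => rw [← hx]
  rw [shift_iterate]

lemma periodic_mod {x : SSeq} {n : ℕ} (hx : shift^[n] x = x) (i : ℕ) :
    x i = x (i % n) := by
  induction i using Nat.strong_induction_on with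
  | _ i ih =>
    rcases Nat.eq_zero_or_pos n with hn | hn
    · simp [hn]
    rcases lt_or_ge i n with h | h
    · rw [Nat.mod_eq_of_lt h]
    · have h1 : i = (i - n) + n := by omega
      have h2 : ((i - n) + n) % n = (i - n) % n := Nat.add_mod_right _ _
      rw [h1, h2, periodic_apply_add hx, ih (i - n) (by omega)]

/-- Zg is infinite at time 0. -/
lemma Zg_zero (a : ℕ+) : Zg φ a 0 = ⊤ := by
  have hinj : Function.Injective
      (fun k : ℕ => (⟨consSeq a (fun _ => ⟨k + 1, Nat.succ_pos k⟩), rfl, rfl⟩ :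
        {x : SSeq // shift^[0] x = x ∧ x 0 = a})) := by
    intro k k' h
    have h2 := congrFun (congrArg Subtype.val h) 1
    simp only [consSeq] at h2
    have := congrArg (fun p : ℕ+ => (p : ℕ)) h2
    simpa using this
  haveI : Infinite {x : SSeq // shift^[0] x = x ∧ x 0 = a} := Infinite.of_injective _ hinj
  unfold Zg
  have : ∀ x : {x : SSeq // shift^[0] x = x ∧ x 0 = a},
      ENNReal.ofReal (Real.exp (birkhoff φ 0 x)) = 1 := by
    intro x; simp [birkhoff]
  rw [tsum_congr this]
  exact ENNReal.tsum_const_eq_top_of_ne_zero one_ne_zero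

/-- Lower bound by the constant sequence. -/
lemma Zg_ge_const (a : ℕ+) (n : ℕ) :
    ENNReal.ofReal (Real.exp (birkhoff φ n (fun _ => a))) ≤ Zg φ a n := by
  have hper : shift^[n] (fun _ => a : SSeq) = (fun _ => a) := by
    funext i; rw [shift_iterate]
  exact ENNReal.le_tsum (⟨fun _ => a, hper, rfl⟩ :
    {x : SSeq // shift^[n] x = x ∧ x 0 = a})

/-- Upper bound for `Zg`. -/
lemma Zg_le (hbdd : ∀ n : ℕ, 1 ≤ n → BddAbove (varSet φ n))
    (hsum : Summable fun n : ℕ => Vn φ (n + 1)) (a : ℕ+) {n : ℕ} (hn : 1 ≤ n) :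
    Zg φ a n ≤ ENNReal.ofReal (Real.exp (∑' k : ℕ, Vn φ (k + 1))) * (opNorm φ) ^ n := by
  set B := ∑' k : ℕ, Vn φ (k + 1) with hB
  set z : SSeq := fun _ => 1 with hz
  set J : {x : SSeq // shift^[n] x = x ∧ x 0 = a} → (Fin n → ℕ+) :=
    fun x => fun i => x.1 i with hJ
  have hJinj : Function.Injective J := by
    intro x y h
    apply Subtype.ext
    funext i
    have hi : i % n < n := Nat.mod_lt _ (by omega)
    have := congrFun h ⟨i % n, hi⟩
    rw [periodic_mod x.2.1 i, periodic_mod y.2.1 i]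
    exact this
  have hterm : ∀ x : {x : SSeq // shift^[n] x = x ∧ x 0 = a},
      ENNReal.ofReal (Real.exp (birkhoff φ n x.1)) ≤
      ENNReal.ofReal (Real.exp B) *
        ENNReal.ofReal (Real.exp (birkhoff φ n (app n (J x) z))) := by
    intro x
    rw [← ENNReal.ofReal_mul (Real.exp_nonneg _), ← Real.exp_add]
    apply ENNReal.ofReal_le_ofReal
    apply Real.exp_le_exp.mpr
    have hag : ∀ i < n, x.1 i = (app n (J x) z) i := by
      intro i hi; simp [app, hi, hJ]
    have := abs_birkhoff_sub_le hbdd hsum n hag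
    rw [abs_le] at this
    linarith [this.1]
  calc Zg φ a n ≤ ∑' x : {x : SSeq // shift^[n] x = x ∧ x 0 = a},
        ENNReal.ofReal (Real.exp B) *
          ENNReal.ofReal (Real.exp (birkhoff φ n (app n (J x) z))) :=
        ENNReal.tsum_le_tsum hterm
    _ = ENNReal.ofReal (Real.exp B) * ∑' x : {x : SSeq // shift^[n] x = x ∧ x 0 = a},
          ENNReal.ofReal (Real.exp (birkhoff φ n (app n (J x) z))) := ENNReal.tsum_mul_left
    _ ≤ ENNReal.ofReal (Real.exp B) * U φ n z := by
        refine mul_le_mul_right ?_ _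
        exact ENNReal.tsum_comp_le_tsum_of_injective hJinj
          (fun w => ENNReal.ofReal (Real.exp (birkhoff φ n (app n w z))))
    _ ≤ ENNReal.ofReal (Real.exp B) * (opNorm φ) ^ n :=
        mul_le_mul_right (U_le n z) _

end Periodic

section Glue
variable {φ : SSeq → ℝ}

/-- Periodic gluing of two periodic sequences. -/
def glue (m n : ℕ) (u v : SSeq) : SSeq :=
  fun i => if i % (m + n) < m then u (i % (m + n)) else v (i % (m + n) - m)

lemma glue_periodic (m n : ℕ) (u v : SSeq) : shift^[m + n] (glue m n u v) = glue m n u v := by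
  funext i
  rw [shift_iterate]
  simp only [glue, Nat.add_mod_right]

lemma glue_left {m n : ℕ} (u v : SSeq) {i : ℕ} (hi : i < m) : glue m n u v i = u i := by
  have h1 : i % (m + n) = i := Nat.mod_eq_of_lt (by omega)
  simp [glue, h1, hi]

lemma glue_right {m n : ℕ} (u v : SSeq) {i : ℕ} (hi : i < n) :
    glue m n u v (i + m) = v i := by
  have h1 : (i + m) % (m + n) = i + m := Nat.mod_eq_of_lt (by omega)
  have h2 : ¬ (i + m < m) := by omega
  simp [glue, h1, h2]

lemma Zg_supermul (hbdd : ∀ n : ℕ, 1 ≤ n → BddAbove (varSet φ n))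
    (hsum : Summable fun n : ℕ => Vn φ (n + 1)) (a : ℕ+) {m n : ℕ}
    (hm : 1 ≤ m) (hn : 1 ≤ n) :
    ENNReal.ofReal (Real.exp (-(2 * ∑' k : ℕ, Vn φ (k + 1)))) * (Zg φ a m * Zg φ a n)
      ≤ Zg φ a (m + n) := by
  set B := ∑' k : ℕ, Vn φ (k + 1) with hB
  set G : {x : SSeq // shift^[m] x = x ∧ x 0 = a} × {x : SSeq // shift^[n] x = x ∧ x 0 = a}
      → {x : SSeq // shift^[m + n] x = x ∧ x 0 = a} :=
    fun p => ⟨glue m n p.1.1 p.2.1, glue_periodic m n _ _, by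
      rw [glue_left _ _ (show 0 < m by omega)]
      exact p.1.2.2⟩ with hG
  have hGinj : Function.Injective G := by
    intro p q h
    have hval : glue m n p.1.1 p.2.1 = glue m n q.1.1 q.2.1 := congrArg Subtype.val h
    have h1 : p.1 = q.1 := by
      apply Subtype.ext; funext i
      rw [periodic_mod p.1.2.1 i, periodic_mod q.1.2.1 i]
      have hi : i % m < m := Nat.mod_lt _ (by omega)
      have := congrFun hval (i % m)
      rwa [glue_left _ _ hi, glue_left _ _ hi] at this
    have h2 : p.2 = q.2 := by
      apply Subtype.ext; funext i
      rw [periodic_mod p.2.2.1 i, periodic_mod q.2.2.1 i]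
      have hi : i % n < n := Nat.mod_lt _ (by omega)
      have := congrFun hval (i % n + m)
      rwa [glue_right _ _ hi, glue_right _ _ hi] at this
    exact Prod.ext h1 h2
  have hterm : ∀ p : {x : SSeq // shift^[m] x = x ∧ x 0 = a} ×
      {x : SSeq // shift^[n] x = x ∧ x 0 = a},
      ENNReal.ofReal (Real.exp (-(2 * B))) *
        (ENNReal.ofReal (Real.exp (birkhoff φ m p.1.1)) *
         ENNReal.ofReal (Real.exp (birkhoff φ n p.2.1))) ≤
      ENNReal.ofReal (Real.exp (birkhoff φ (m + n) ((G p).1))) := by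
    intro p
    rw [← ENNReal.ofReal_mul (Real.exp_nonneg _), ← ENNReal.ofReal_mul (Real.exp_nonneg _),
      ← Real.exp_add, ← Real.exp_add]
    apply ENNReal.ofReal_le_ofReal
    apply Real.exp_le_exp.mpr
    have hx : (G p).1 = glue m n p.1.1 p.2.1 := rfl
    rw [hx, birkhoff_add]
    have e1 : |birkhoff φ m (glue m n p.1.1 p.2.1) - birkhoff φ m p.1.1| ≤ B := by
      refine abs_birkhoff_sub_le hbdd hsum m fun i hi => ?_
      exact glue_left _ _ hi
    have e2 : |birkhoff φ n (shift^[m] (glue m n p.1.1 p.2.1)) - birkhoff φ n p.2.1| ≤ B := by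
      refine abs_birkhoff_sub_le hbdd hsum n fun i hi => ?_
      rw [shift_iterate]
      exact glue_right _ _ hi
    rw [abs_le] at e1 e2
    linarith [e1.1, e2.1]
  have hprod : (∑' p : {x : SSeq // shift^[m] x = x ∧ x 0 = a} ×
        {x : SSeq // shift^[n] x = x ∧ x 0 = a},
      ENNReal.ofReal (Real.exp (birkhoff φ m p.1.1)) *
        ENNReal.ofReal (Real.exp (birkhoff φ n p.2.1))) = Zg φ a m * Zg φ a n := by
    rw [ENNReal.tsum_prod']
    unfold Zg
    rw [← ENNReal.tsum_mul_right]
    exact tsum_congr fun u => ENNReal.tsum_mul_left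
      (a := ENNReal.ofReal (Real.exp (birkhoff φ m u.1)))
      (f := fun v : {x : SSeq // shift^[n] x = x ∧ x 0 = a} =>
        ENNReal.ofReal (Real.exp (birkhoff φ n v.1)))
  calc ENNReal.ofReal (Real.exp (-(2 * B))) * (Zg φ a m * Zg φ a n)
      = ∑' p : {x : SSeq // shift^[m] x = x ∧ x 0 = a} ×
          {x : SSeq // shift^[n] x = x ∧ x 0 = a},
        ENNReal.ofReal (Real.exp (-(2 * B))) *
          (ENNReal.ofReal (Real.exp (birkhoff φ m p.1.1)) *
           ENNReal.ofReal (Real.exp (birkhoff φ n p.2.1))) := by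
        rw [← hprod, ENNReal.tsum_mul_left]
    _ ≤ ∑' p : {x : SSeq // shift^[m] x = x ∧ x 0 = a} ×
          {x : SSeq // shift^[n] x = x ∧ x 0 = a},
        ENNReal.ofReal (Real.exp (birkhoff φ (m + n) ((G p).1))) :=
        ENNReal.tsum_le_tsum hterm
    _ ≤ Zg φ a (m + n) :=
        ENNReal.tsum_comp_le_tsum_of_injective hGinj
          (fun x => ENNReal.ofReal (Real.exp (birkhoff φ (m + n) x.1)))

end Glue

section Change
variable {φ : SSeq → ℝ}

lemma Zg_change (hbdd : ∀ n : ℕ, 1 ≤ n → BddAbove (varSet φ n))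
    (hsum : Summable fun n : ℕ => Vn φ (n + 1)) (a b : ℕ+) {n : ℕ} (hn : 1 ≤ n) :
    ENNReal.ofReal (Real.exp (φ (fun _ => a) - φ (fun _ => b) - 2 * Vn φ 1
        - ∑' k : ℕ, Vn φ (k + 1))) * Zg φ b n ≤ Zg φ a n := by
  set B := ∑' k : ℕ, Vn φ (k + 1) with hB
  obtain ⟨k, rfl⟩ : ∃ k, n = 1 + k := ⟨n - 1, by omega⟩
  set R : {x : SSeq // shift^[1 + k] x = x ∧ x 0 = b} →
      {x : SSeq // shift^[1 + k] x = x ∧ x 0 = a} := fun x =>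
    ⟨fun i => if i % (1 + k) = 0 then a else x.1 i, by
      funext i
      rw [shift_iterate]
      simp only [Nat.add_mod_right]
      split_ifs with h
      · rfl
      · exact periodic_apply_add x.2.1 i, by simp⟩ with hR
  have hRinj : Function.Injective R := by
    intro x y h
    have hval : (fun i => if i % (1 + k) = 0 then a else x.1 i)
        = (fun i => if i % (1 + k) = 0 then a else y.1 i) := congrArg Subtype.val h
    apply Subtype.ext; funext i
    by_cases hi : i % (1 + k) = 0
    · rw [periodic_mod x.2.1 i, periodic_mod y.2.1 i, hi, x.2.2, y.2.2]
    · have := congrFun hval i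
      simpa [hi] using this
  have hterm : ∀ x : {x : SSeq // shift^[1 + k] x = x ∧ x 0 = b},
      ENNReal.ofReal (Real.exp (φ (fun _ => a) - φ (fun _ => b) - 2 * Vn φ 1 - B)) *
        ENNReal.ofReal (Real.exp (birkhoff φ (1 + k) x.1)) ≤
      ENNReal.ofReal (Real.exp (birkhoff φ (1 + k) ((R x).1))) := by
    intro x
    rw [← ENNReal.ofReal_mul (Real.exp_nonneg _), ← Real.exp_add]
    apply ENNReal.ofReal_le_ofReal
    apply Real.exp_le_exp.mpr
    set x' : SSeq := (R x).1 with hx'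
    have hsplit : ∀ y : SSeq, birkhoff φ (1 + k) y = φ y + birkhoff φ k (shift y) := by
      intro y
      rw [birkhoff_add, Function.iterate_one]
      congr 1
      unfold birkhoff
      rw [Finset.sum_range_one]
      rfl
    rw [hsplit x', hsplit x.1]
    have hx'0 : x' 0 = a := by simp [hx', hR]
    have e1 : |φ x' - φ (fun _ => a)| ≤ Vn φ 1 := by
      refine abs_sub_le_Vn hbdd le_rfl fun i hi => ?_
      interval_cases i
      · exact hx'0
    have e2 : |φ x.1 - φ (fun _ => b)| ≤ Vn φ 1 := by
      refine abs_sub_le_Vn hbdd le_rfl fun i hi => ?_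
      interval_cases i
      · exact x.2.2
    have e3 : |birkhoff φ k (shift x') - birkhoff φ k (shift x.1)| ≤ B := by
      refine abs_birkhoff_sub_le hbdd hsum k fun i hi => ?_
      show x' (i + 1) = x.1 (i + 1)
      have h1 : (i + 1) % (1 + k) = i + 1 := Nat.mod_eq_of_lt (by omega)
      simp [hx', hR, h1]
    rw [abs_le] at e1 e2 e3
    linarith [e1.1, e2.2, e3.1]
  calc ENNReal.ofReal (Real.exp (φ (fun _ => a) - φ (fun _ => b) - 2 * Vn φ 1 - B)) *
        Zg φ b (1 + k)
      = ∑' x : {x : SSeq // shift^[1 + k] x = x ∧ x 0 = b},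
        ENNReal.ofReal (Real.exp (φ (fun _ => a) - φ (fun _ => b) - 2 * Vn φ 1 - B)) *
          ENNReal.ofReal (Real.exp (birkhoff φ (1 + k) x.1)) := by
        unfold Zg; rw [ENNReal.tsum_mul_left]
    _ ≤ ∑' x : {x : SSeq // shift^[1 + k] x = x ∧ x 0 = b},
        ENNReal.ofReal (Real.exp (birkhoff φ (1 + k) ((R x).1))) :=
        ENNReal.tsum_le_tsum hterm
    _ ≤ Zg φ a (1 + k) :=
        ENNReal.tsum_comp_le_tsum_of_injective hRinj
          (fun x => ENNReal.ofReal (Real.exp (birkhoff φ (1 + k) x.1)))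

end Change

open scoped Topology

lemma opNorm_pos (φ : SSeq → ℝ) : 0 < opNorm φ := by
  have h1 : ENNReal.ofReal (Real.exp (φ (consSeq 1 (fun _ => 1)))) ≤
      ∑' s : ℕ+, ENNReal.ofReal (Real.exp (φ (consSeq s (fun _ => 1)))) := ENNReal.le_tsum 1
  have h2 := tsum_cons_le (φ := φ) (fun _ => 1)
  exact lt_of_lt_of_le (ENNReal.ofReal_pos.mpr (Real.exp_pos _)) (h1.trans h2)

theorem gurevich_pressure_exists' (φ : SSeq → ℝ)
    (hbdd : ∀ n : ℕ, 1 ≤ n → BddAbove (varSet φ n))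
    (hsum : Summable fun n : ℕ => Vn φ (n + 1))
    (hnorm : opNorm φ ≠ ⊤) :
    ∃ P : ℝ, IsGurevich φ P ∧ P ≤ Real.log (opNorm φ).toReal := by
  set B := ∑' k : ℕ, Vn φ (k + 1) with hB
  have hBnn : 0 ≤ B := B_nonneg hbdd
  set L := Real.log (opNorm φ).toReal with hL
  set f : ℕ+ → ℕ → ℝ := fun a n => Real.log (Zg φ a n).toReal with hf
  have hMr : 0 < (opNorm φ).toReal := ENNReal.toReal_pos (opNorm_pos φ).ne' hnorm
  -- basic finiteness / positivity
  have hZ0 : ∀ (a : ℕ+) (n : ℕ), Zg φ a n ≠ 0 := by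
    intro a n
    have := Zg_ge_const (φ := φ) a n
    exact fun h => by
      rw [h] at this
      exact absurd (le_antisymm this zero_le)
        (ENNReal.ofReal_pos.mpr (Real.exp_pos _)).ne'
  have hZt : ∀ (a : ℕ+) {n : ℕ}, 1 ≤ n → Zg φ a n ≠ ⊤ := by
    intro a n hn
    refine ne_top_of_le_ne_top ?_ (Zg_le hbdd hsum a hn)
    exact ENNReal.mul_ne_top ENNReal.ofReal_ne_top (ENNReal.pow_ne_top hnorm)
  have hZpos : ∀ (a : ℕ+) {n : ℕ}, 1 ≤ n → 0 < (Zg φ a n).toReal :=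
    fun a n hn => ENNReal.toReal_pos (hZ0 a n) (hZt a hn)
  have hf0 : ∀ a : ℕ+, f a 0 = 0 := by
    intro a
    simp [hf, Zg_zero]
  -- key log-translation lemma
  have key : ∀ (c : ℝ) (X Y : ℝ≥0∞), X ≠ 0 → X ≠ ⊤ → Y ≠ ⊤ →
      ENNReal.ofReal (Real.exp c) * X ≤ Y →
      c + Real.log X.toReal ≤ Real.log Y.toReal := by
    intro c X Y hX0 hXt hYt h
    have hXpos : 0 < X.toReal := ENNReal.toReal_pos hX0 hXt
    have h2 : Real.exp c * X.toReal ≤ Y.toReal := by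
      have := ENNReal.toReal_mono hYt h
      rwa [ENNReal.toReal_mul, ENNReal.toReal_ofReal (Real.exp_nonneg _)] at this
    have h3 : Real.log (Real.exp c * X.toReal) ≤ Real.log Y.toReal :=
      Real.log_le_log (by positivity) h2
    rwa [Real.log_mul (Real.exp_ne_zero _) (ne_of_gt hXpos), Real.log_exp] at h3
  -- upper bound
  have hub : ∀ (a : ℕ+) {n : ℕ}, 1 ≤ n → f a n ≤ B + n * L := by
    intro a n hn
    have h1 : (Zg φ a n).toReal ≤ Real.exp B * (opNorm φ).toReal ^ n := by
      have := ENNReal.toReal_mono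
        (ENNReal.mul_ne_top ENNReal.ofReal_ne_top (ENNReal.pow_ne_top hnorm))
        (Zg_le hbdd hsum a hn)
      rwa [ENNReal.toReal_mul, ENNReal.toReal_ofReal (Real.exp_nonneg _),
        ENNReal.toReal_pow] at this
    have h2 : f a n ≤ Real.log (Real.exp B * (opNorm φ).toReal ^ n) :=
      Real.log_le_log (hZpos a hn) h1
    rwa [Real.log_mul (Real.exp_ne_zero _) (by positivity), Real.log_exp,
      Real.log_pow] at h2
  -- superadditivity
  have hsuper : ∀ (a : ℕ+) {m n : ℕ}, 1 ≤ m → 1 ≤ n →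
      f a m + f a n - 2 * B ≤ f a (m + n) := by
    intro a m n hm hn
    have h := key (-(2 * B)) (Zg φ a m * Zg φ a n) (Zg φ a (m + n))
      (mul_ne_zero (hZ0 a m) (hZ0 a n))
      (ENNReal.mul_ne_top (hZt a hm) (hZt a hn))
      (hZt a (by omega))
      (Zg_supermul hbdd hsum a hm hn)
    rw [ENNReal.toReal_mul, Real.log_mul (hZpos a hm).ne' (hZpos a hn).ne'] at h
    unfold f
    linarith
  -- change of base point
  have hchange : ∀ (a b : ℕ+) {n : ℕ}, 1 ≤ n →
      (φ (fun _ => a) - φ (fun _ => b) - 2 * Vn φ 1 - B) + f b n ≤ f a n := by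
    intro a b n hn
    exact key _ (Zg φ b n) (Zg φ a n) (hZ0 b n) (hZt b hn) (hZt a hn)
      (Zg_change hbdd hsum a b hn)
  -- Fekete for each a
  have exists_lim : ∀ a : ℕ+, ∃ p : ℝ, p ≤ L ∧
      Tendsto (fun n : ℕ => f a n / n) atTop (𝓝 p) := by
    intro a
    set g : ℕ → ℝ := fun n => 2 * B - f a n with hg
    have hsub : Subadditive g := by
      intro m n
      rcases Nat.eq_zero_or_pos m with hm | hm
      · subst hm
        have : g 0 = 2 * B := by simp [hg, hf0]
        simp only [Nat.zero_add, this]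
        linarith
      rcases Nat.eq_zero_or_pos n with hn | hn
      · subst hn
        have : g 0 = 2 * B := by simp [hg, hf0]
        simp only [Nat.add_zero, this]
        linarith
      · have := hsuper a hm hn
        simp only [hg]
        linarith
    have hbb : BddBelow (Set.range fun n : ℕ => g n / n) := by
      refine ⟨min 0 (-L), ?_⟩
      rintro y ⟨n, rfl⟩
      rcases Nat.eq_zero_or_pos n with hn | hn
      · subst hn
        simp only [Nat.cast_zero, div_zero]
        exact min_le_left _ _
      · have h1 := hub a hn
        have hnpos : (0:ℝ) < n := by positivity
        have : -L ≤ g n / n := by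
          rw [le_div_iff₀ hnpos]
          simp only [hg]
          nlinarith
        exact (min_le_right _ _).trans this
    have hT := hsub.tendsto_lim hbb
    refine ⟨0 - hsub.lim, ?_, ?_⟩
    · -- p ≤ L
      have h1 : Tendsto (fun n : ℕ => B / n + L) atTop (𝓝 (0 + L)) :=
        (tendsto_const_div_atTop_nhds_zero_nat B).add tendsto_const_nhds
      have h2 : Tendsto (fun n : ℕ => f a n / n) atTop (𝓝 (0 - hsub.lim)) := by
        have hc : Tendsto (fun n : ℕ => (2 * B) / n) atTop (𝓝 0) :=
          tendsto_const_div_atTop_nhds_zero_nat (2 * B)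
        have := hc.sub hT
        refine this.congr fun n => ?_
        simp only [hg, sub_div]
        ring
      have hev : ∀ᶠ n : ℕ in atTop, f a n / n ≤ B / n + L := by
        refine eventually_atTop.2 ⟨1, fun n hn => ?_⟩
        have hnpos : (0:ℝ) < n := by positivity
        have h3 := hub a hn
        have h4 : f a n / n ≤ (B + n * L) / n := by gcongr
        have h5 : (B + n * L) / n = B / n + L := by field_simp
        rw [h5] at h4
        exact h4
      have := le_of_tendsto_of_tendsto h2 h1 hev
      linarith
    · have hc : Tendsto (fun n : ℕ => (2 * B) / n) atTop (𝓝 0) :=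
        tendsto_const_div_atTop_nhds_zero_nat (2 * B)
      have := hc.sub hT
      refine this.congr fun n => ?_
      simp only [hg, sub_div]
      ring
  choose Pf hPle hPtend using exists_lim
  have hPeq : ∀ a b : ℕ+, Pf b ≤ Pf a := by
    intro a b
    set c : ℝ := φ (fun _ => a) - φ (fun _ => b) - 2 * Vn φ 1 - B with hc
    have h1 : Tendsto (fun n : ℕ => c / n + f b n / n) atTop (𝓝 (0 + Pf b)) :=
      (tendsto_const_div_atTop_nhds_zero_nat c).add (hPtend b)
    have hev : ∀ᶠ n : ℕ in atTop, c / n + f b n / n ≤ f a n / n := by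
      refine eventually_atTop.2 ⟨1, fun n hn => ?_⟩
      have hnpos : (0:ℝ) < n := by positivity
      have h2 : c + f b n ≤ f a n := hchange a b hn
      have h4 : (c + f b n) / n ≤ f a n / n := by gcongr
      calc c / n + f b n / n = (c + f b n) / n := by rw [← add_div]
        _ ≤ f a n / n := h4
    have := le_of_tendsto_of_tendsto h1 (hPtend a) hev
    linarith
  refine ⟨Pf 1, fun a => ?_, hPle 1⟩
  have hPa : Pf a = Pf 1 := le_antisymm (hPeq 1 a) (hPeq a 1)
  have := hPtend a
  rw [hPa] at this
  refine this.congr fun n => ?_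
  simp [hf, div_eq_inv_mul]

/-- If `φ` has summable variations and `sup_x Σ_s e^{φ(sx)} < ∞`, the Gurevich pressure
`P_G(φ) = lim (1/n) log Z_n(φ,a)` exists, is finite, does not depend on `a`, and is at most
`log(sup_x Σ_s e^{φ(sx)})`. -/
theorem gurevich_pressure_exists (φ : SSeq → ℝ)
    (hbdd : ∀ n : ℕ, 1 ≤ n → BddAbove (varSet φ n))
    (hsum : Summable fun n : ℕ => Vn φ (n + 1))
    (hnorm : opNorm φ ≠ ⊤) :
    ∃ P : ℝ, IsGurevich φ P ∧ P ≤ Real.log (opNorm φ).toReal :=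
  gurevich_pressure_exists' φ hbdd hsum hnorm
end

section
/- Suppose Σ_{n≥1} |ρ(n)| < ∞. Then: (a) for every n ≥ 1, V_n(G) ≤ 2 Σ_{k≥n} |ρ(k)|; (b) for every β ≥ 0, every constant c ∈ ℝ and every F ≥ 0, V_n(β²G + log K∘π_0) = V_n(β²G + log K∘π_0 − c − F·π_0) = β² V_n(G) for all n ≥ 1; (c) consequently, if Σ_{n≥1} n|ρ(n)| < ∞ then Σ_{n≥1} V_n(φ_β) < ∞, and if there exist C > 0 and ϱ ∈ (0,1) with |ρ(n)| ≤ C ϱ^n for all n ≥ 1, then V_n(φ_β) ≤ (2Cβ²/(1−ϱ)) ϱ^n for all n ≥ 1. -/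
open Real Filter Finset

/-- The potential `G(t) = Σ_{k≥0} ρ(t_0+⋯+t_k)`. -/
noncomputable def Gpot (ρ : ℕ → ℝ) (t : SSeq) : ℝ :=
  ∑' k : ℕ, ρ (∑ i ∈ Finset.range (k + 1), (t i : ℕ))

/-- The potential `φ_β = β²G + log K ∘ π_0`. -/
noncomputable def phiBeta (K ρ : ℕ → ℝ) (β : ℝ) (t : SSeq) : ℝ :=
  β ^ 2 * Gpot ρ t + Real.log (K (t 0))

open scoped Pointwise

section Aux

variable {ρ : ℕ → ℝ}

/-- Partial sums of coordinates. -/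
private def Sfun (x : SSeq) (k : ℕ) : ℕ := ∑ i ∈ Finset.range (k + 1), (x i : ℕ)

private lemma Gpot_eq (ρ : ℕ → ℝ) (x : SSeq) : Gpot ρ x = ∑' k, ρ (Sfun x k) := rfl

private lemma Sfun_strictMono (x : SSeq) : StrictMono (Sfun x) := by
  apply strictMono_nat_of_lt_succ
  intro k
  have h : Sfun x (k + 1) = Sfun x k + (x (k + 1) : ℕ) := Finset.sum_range_succ _ _
  have hp : 0 < (x (k + 1) : ℕ) := (x (k + 1)).property
  rw [h]
  omega

private lemma Sfun_ge (x : SSeq) (k : ℕ) : k + 1 ≤ Sfun x k := by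
  have h : ∑ _i ∈ Finset.range (k + 1), 1 ≤ ∑ i ∈ Finset.range (k + 1), (x i : ℕ) :=
    Finset.sum_le_sum fun i _ => (x i).property
  simpa [Sfun] using h

private lemma Sfun_agree {x y : SSeq} {n : ℕ} (hxy : ∀ i < n, x i = y i) {k : ℕ}
    (hk : k < n) : Sfun x k = Sfun y k := by
  refine Finset.sum_congr rfl fun i hi => ?_
  rw [Finset.mem_range] at hi
  rw [hxy i (by omega)]

private lemma summable_absρ_Sfun (hρ : Summable fun n : ℕ => |ρ (n + 1)|) (x : SSeq) :
    Summable fun k => |ρ (Sfun x k)| := by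
  have hinj : Function.Injective fun k => Sfun x k - 1 := by
    intro a b hab
    have ha := Sfun_ge x a
    have hb := Sfun_ge x b
    simp only at hab
    exact (Sfun_strictMono x).injective (by omega)
  have := hρ.comp_injective hinj
  refine this.congr fun k => ?_
  have hk := Sfun_ge x k
  simp only [Function.comp]
  congr 2
  omega

private lemma summable_tail (hρ : Summable fun n : ℕ => |ρ (n + 1)|) {n : ℕ} (hn : 1 ≤ n) :
    Summable fun j => |ρ (n + j)| := by
  have := (summable_nat_add_iff (f := fun m : ℕ => |ρ (m + 1)|) (n - 1)).2 hρ
  refine this.congr fun j => ?_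
  congr 2
  omega

private lemma tail_nonneg (n : ℕ) : 0 ≤ ∑' k : ℕ, |ρ (n + k)| :=
  tsum_nonneg fun _ => abs_nonneg _

/-- The key estimate: the variation of `G` between two sequences agreeing on the
first `n` coordinates. -/
private lemma G_diff_le (hρ : Summable fun n : ℕ => |ρ (n + 1)|) {n : ℕ} (hn : 1 ≤ n)
    {x y : SSeq} (hxy : ∀ i < n, x i = y i) :
    |Gpot ρ x - Gpot ρ y| ≤ 2 * ∑' k : ℕ, |ρ (n + k)| := by
  have hsx := summable_absρ_Sfun hρ x
  have hsy := summable_absρ_Sfun hρ y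
  have hsx' : Summable fun k => ρ (Sfun x k) := hsx.of_abs
  have hsy' : Summable fun k => ρ (Sfun y k) := hsy.of_abs
  have hsxs : Summable fun i => |ρ (Sfun x (i + n))| :=
    (summable_nat_add_iff (f := fun k => |ρ (Sfun x k)|) n).2 hsx
  have hsys : Summable fun i => |ρ (Sfun y (i + n))| :=
    (summable_nat_add_iff (f := fun k => |ρ (Sfun y k)|) n).2 hsy
  have hx := Summable.sum_add_tsum_nat_add (f := fun k => ρ (Sfun x k)) n hsx'
  have hy := Summable.sum_add_tsum_nat_add (f := fun k => ρ (Sfun y k)) n hsy'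
  have hhead : ∑ i ∈ Finset.range n, ρ (Sfun x i) = ∑ i ∈ Finset.range n, ρ (Sfun y i) := by
    refine Finset.sum_congr rfl fun i hi => ?_
    rw [Finset.mem_range] at hi
    rw [Sfun_agree hxy hi]
  have hdiff : Gpot ρ x - Gpot ρ y
      = (∑' i : ℕ, ρ (Sfun x (i + n))) - ∑' i : ℕ, ρ (Sfun y (i + n)) := by
    rw [Gpot_eq, Gpot_eq, ← hx, ← hy, hhead]
    ring
  have tail_le : ∀ z : SSeq, (Summable fun i => |ρ (Sfun z (i + n))|) →
      (∑' i : ℕ, |ρ (Sfun z (i + n))|) ≤ ∑' k : ℕ, |ρ (n + k)| := by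
    intro z hsz
    refine hsz.tsum_le_tsum_of_inj (fun i => Sfun z (i + n) - n) ?_
      (fun c _ => abs_nonneg _) (fun i => ?_) (summable_tail hρ hn)
    · intro a b hab
      have ha := Sfun_ge z (a + n)
      have hb := Sfun_ge z (b + n)
      simp only at hab
      have := (Sfun_strictMono z).injective (a₁ := a + n) (a₂ := b + n) (by omega)
      omega
    · have hi := Sfun_ge z (i + n)
      have : n + (Sfun z (i + n) - n) = Sfun z (i + n) := by omega
      rw [this]
  have habs : ∀ z : SSeq, (Summable fun i => |ρ (Sfun z (i + n))|) →
      |∑' i : ℕ, ρ (Sfun z (i + n))| ≤ ∑' i : ℕ, |ρ (Sfun z (i + n))| := by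
    intro z hsz
    simpa [Real.norm_eq_abs] using
      norm_tsum_le_tsum_norm (f := fun i => ρ (Sfun z (i + n))) (by simpa [Real.norm_eq_abs] using hsz)
  calc |Gpot ρ x - Gpot ρ y|
      ≤ |∑' i : ℕ, ρ (Sfun x (i + n))| + |∑' i : ℕ, ρ (Sfun y (i + n))| := by
        rw [hdiff]; exact abs_sub _ _
    _ ≤ (∑' i : ℕ, |ρ (Sfun x (i + n))|) + ∑' i : ℕ, |ρ (Sfun y (i + n))| :=
        add_le_add (habs x hsxs) (habs y hsys)
    _ ≤ (∑' k : ℕ, |ρ (n + k)|) + ∑' k : ℕ, |ρ (n + k)| :=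
        add_le_add (tail_le x hsxs) (tail_le y hsys)
    _ = 2 * ∑' k : ℕ, |ρ (n + k)| := by ring

private lemma varSet_nonempty (φ : SSeq → ℝ) (n : ℕ) : (varSet φ n).Nonempty :=
  ⟨0, fun _ => 1, fun _ => 1, fun _ _ => rfl, by simp⟩

private lemma varSet_G_le (hρ : Summable fun n : ℕ => |ρ (n + 1)|) {n : ℕ} (hn : 1 ≤ n) :
    ∀ d ∈ varSet (Gpot ρ) n, d ≤ 2 * ∑' k : ℕ, |ρ (n + k)| := by
  rintro d ⟨x, y, hxy, rfl⟩
  exact G_diff_le hρ hn hxy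

private lemma VnG_le (hρ : Summable fun n : ℕ => |ρ (n + 1)|) {n : ℕ} (hn : 1 ≤ n) :
    Vn (Gpot ρ) n ≤ 2 * ∑' k : ℕ, |ρ (n + k)| :=
  Real.sSup_le (varSet_G_le hρ hn) (by linarith [tail_nonneg (ρ := ρ) n])

private lemma VnG_nonneg (hρ : Summable fun n : ℕ => |ρ (n + 1)|) {n : ℕ} (hn : 1 ≤ n) :
    0 ≤ Vn (Gpot ρ) n := by
  refine le_csSup ⟨2 * ∑' k : ℕ, |ρ (n + k)|, fun d hd => varSet_G_le hρ hn d hd⟩ ?_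
  obtain ⟨x, hx⟩ := varSet_nonempty (Gpot ρ) n
  exact ⟨fun _ => 1, fun _ => 1, fun _ _ => rfl, by simp⟩

/-- If `φ x - φ y = a * (ψ x - ψ y)` whenever `x, y` agree on the first `n`
coordinates, and `0 ≤ a`, then `V_n(φ) = a * V_n(ψ)`. -/
private lemma Vn_scale {φ ψ : SSeq → ℝ} {a : ℝ} (ha : 0 ≤ a) {n : ℕ}
    (h : ∀ x y : SSeq, (∀ i < n, x i = y i) → φ x - φ y = a * (ψ x - ψ y)) :
    Vn φ n = a * Vn ψ n := by
  have hset : varSet φ n = a • varSet ψ n := by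
    ext d
    constructor
    · rintro ⟨x, y, hxy, rfl⟩
      refine ⟨|ψ x - ψ y|, ⟨x, y, hxy, rfl⟩, ?_⟩
      show a * |ψ x - ψ y| = |φ x - φ y|
      rw [← abs_of_nonneg ha, ← abs_mul, ← h x y hxy]
    · rintro ⟨e, ⟨x, y, hxy, rfl⟩, rfl⟩
      refine ⟨x, y, hxy, ?_⟩
      show a * |ψ x - ψ y| = |φ x - φ y|
      rw [← abs_of_nonneg ha, ← abs_mul, ← h x y hxy]
  rw [Vn, hset, Real.sSup_smul_of_nonneg ha, smul_eq_mul, Vn]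

end Aux

/-- The counting equivalence `(Σ m, Fin (m+1)) ≃ ℕ × ℕ`, `⟨m, j⟩ ↦ (j, m - j)`. -/
private def sigmaProdEquiv : (Σ m : ℕ, Fin (m + 1)) ≃ ℕ × ℕ where
  toFun p := (p.2.1, p.1 - p.2.1)
  invFun q := ⟨q.1 + q.2, ⟨q.1, by omega⟩⟩
  left_inv p := by
    obtain ⟨m, j, hj⟩ := p
    exact Sigma.ext (show j + (m - j) = m by omega)
      ((Fin.heq_ext_iff (show j + (m - j) + 1 = m + 1 by omega)).2 rfl)
  right_inv q := by
    obtain ⟨a, b⟩ := q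
    simp

set_option maxHeartbeats 1000000 in
/-- Variations of the potentials `G` and `φ_β` in terms of the decay of the correlations. -/
theorem variations_of_potentials (K ρ : ℕ → ℝ)
    (hKpos : ∀ n : ℕ, 1 ≤ n → 0 < K n)
    (hKsum : HasSum (fun n : ℕ => K (n + 1)) 1)
    (hρ : Summable fun n : ℕ => |ρ (n + 1)|)
    (β : ℝ) (hβ : 0 ≤ β) :
    (∀ n : ℕ, 1 ≤ n → Vn (Gpot ρ) n ≤ 2 * ∑' k : ℕ, |ρ (n + k)|) ∧
      (∀ c F : ℝ, 0 ≤ F → ∀ n : ℕ, 1 ≤ n →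
        Vn (phiBeta K ρ β) n = β ^ 2 * Vn (Gpot ρ) n ∧
          Vn (fun t => phiBeta K ρ β t - c - F * ((t 0 : ℕ) : ℝ)) n
            = β ^ 2 * Vn (Gpot ρ) n) ∧
      ((Summable fun n : ℕ => ((n : ℝ) + 1) * |ρ (n + 1)|) →
        Summable fun n : ℕ => Vn (phiBeta K ρ β) (n + 1)) ∧
      (∀ C ϱ : ℝ, 0 < C → ϱ ∈ Set.Ioo (0 : ℝ) 1 →
        (∀ n : ℕ, 1 ≤ n → |ρ n| ≤ C * ϱ ^ n) →
        ∀ n : ℕ, 1 ≤ n → Vn (phiBeta K ρ β) n ≤ 2 * C * β ^ 2 / (1 - ϱ) * ϱ ^ n) := by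
  have hβ2 : (0 : ℝ) ≤ β ^ 2 := sq_nonneg β
  -- part (b), proved first
  have hb : ∀ c F : ℝ, ∀ n : ℕ, 1 ≤ n →
      Vn (phiBeta K ρ β) n = β ^ 2 * Vn (Gpot ρ) n ∧
        Vn (fun t => phiBeta K ρ β t - c - F * ((t 0 : ℕ) : ℝ)) n
          = β ^ 2 * Vn (Gpot ρ) n := by
    intro c F n hn
    constructor
    · refine Vn_scale hβ2 fun x y hxy => ?_
      have h0 : x 0 = y 0 := hxy 0 (by omega)
      simp only [phiBeta, h0]
      ring
    · refine Vn_scale hβ2 fun x y hxy => ?_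
      have h0 : x 0 = y 0 := hxy 0 (by omega)
      simp only [phiBeta, h0]
      ring
  refine ⟨fun n hn => VnG_le hρ hn, fun c F _ n hn => hb c F n hn, ?_, ?_⟩
  -- part (c), summability
  · intro hsum
    set A : ℕ → ENNReal := fun m => ENNReal.ofReal |ρ (m + 1)| with hA
    have hAsum : (∑' m : ℕ, ((m : ENNReal) + 1) * A m) ≠ ⊤ := by
      have h1 : ENNReal.ofReal (∑' n : ℕ, ((n : ℝ) + 1) * |ρ (n + 1)|)
          = ∑' n : ℕ, ENNReal.ofReal (((n : ℝ) + 1) * |ρ (n + 1)|) :=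
        ENNReal.ofReal_tsum_of_nonneg (fun n => by positivity) hsum
      have h2 : ∀ n : ℕ, ENNReal.ofReal (((n : ℝ) + 1) * |ρ (n + 1)|)
          = ((n : ENNReal) + 1) * A n := by
        intro n
        rw [ENNReal.ofReal_mul (by positivity), hA]
        congr 1
        rw [show ((n : ℝ) + 1) = ((n + 1 : ℕ) : ℝ) by push_cast; ring,
          ENNReal.ofReal_natCast]
        push_cast
        ring
      rw [← tsum_congr h2, ← h1]
      exact ENNReal.ofReal_ne_top
    have hstep : ∀ q : Σ m : ℕ, Fin (m + 1),
        A ((sigmaProdEquiv q).1 + (sigmaProdEquiv q).2) = A q.1 := by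
      rintro ⟨m, j, hj⟩
      exact congrArg A (show j + (m - j) = m by omega)
    have hkey : (∑' n : ℕ, ∑' k : ℕ, A (n + k)) = ∑' m : ℕ, ((m : ENNReal) + 1) * A m := by
      calc (∑' n : ℕ, ∑' k : ℕ, A (n + k))
          = ∑' p : ℕ × ℕ, A (p.1 + p.2) :=
            (ENNReal.tsum_prod' (f := fun p : ℕ × ℕ => A (p.1 + p.2))).symm
        _ = ∑' q : Σ m : ℕ, Fin (m + 1), A ((sigmaProdEquiv q).1 + (sigmaProdEquiv q).2) :=
            (sigmaProdEquiv.tsum_eq (fun p : ℕ × ℕ => A (p.1 + p.2))).symm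
        _ = ∑' q : Σ m : ℕ, Fin (m + 1), A q.1 := tsum_congr hstep
        _ = ∑' m : ℕ, ∑' j : Fin (m + 1), A m := ENNReal.tsum_sigma' (fun q => A q.1)
        _ = ∑' m : ℕ, ((m : ENNReal) + 1) * A m := by
            refine tsum_congr fun m => ?_
            rw [tsum_fintype, Finset.sum_const, Finset.card_univ, Fintype.card_fin,
              nsmul_eq_mul]
            push_cast
            ring
    have hne : (∑' n : ℕ, ∑' k : ℕ, A (n + k)) ≠ ⊤ := by
      rw [hkey]; exact hAsum
    have hg_eq : ∀ n : ℕ, (∑' k : ℕ, A (n + k)).toReal = ∑' k : ℕ, |ρ (n + 1 + k)| := by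
      intro n
      have hst : Summable fun k => |ρ (n + 1 + k)| := summable_tail hρ (by omega)
      have : ENNReal.ofReal (∑' k : ℕ, |ρ (n + 1 + k)|)
          = ∑' k : ℕ, ENNReal.ofReal |ρ (n + 1 + k)| :=
        ENNReal.ofReal_tsum_of_nonneg (fun _ => abs_nonneg _) hst
      have h3 : ∀ k : ℕ, ENNReal.ofReal |ρ (n + 1 + k)| = A (n + k) := by
        intro k
        simp only [hA]
        rw [show n + 1 + k = n + k + 1 by omega]
      rw [← tsum_congr h3, ← this, ENNReal.toReal_ofReal (tsum_nonneg fun _ => abs_nonneg _)]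
    have hT : Summable fun n : ℕ => ∑' k : ℕ, |ρ (n + 1 + k)| := by
      have := ENNReal.summable_toReal (f := fun n => ∑' k : ℕ, A (n + k)) hne
      exact this.congr hg_eq
    have hTb : Summable fun n : ℕ => β ^ 2 * (2 * ∑' k : ℕ, |ρ (n + 1 + k)|) := by
      refine (hT.mul_left (β ^ 2 * 2)).congr fun n => ?_
      ring
    refine Summable.of_nonneg_of_le (fun n => ?_) (fun n => ?_) hTb
    · rw [(hb 0 0 (n + 1) (by omega)).1]
      exact mul_nonneg hβ2 (VnG_nonneg hρ (by omega))
    · rw [(hb 0 0 (n + 1) (by omega)).1]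
      refine mul_le_mul_of_nonneg_left ?_ hβ2
      exact VnG_le hρ (n := n + 1) (by omega)
  -- part (c), exponential decay
  · intro C ϱ hC hϱ hρC n hn
    obtain ⟨hϱ0, hϱ1⟩ := hϱ
    have h1ϱ : (0 : ℝ) < 1 - ϱ := by linarith
    have hgs : Summable fun k : ℕ => C * ϱ ^ n * ϱ ^ k :=
      (summable_geometric_of_lt_one hϱ0.le hϱ1).mul_left _
    have htail : (∑' k : ℕ, |ρ (n + k)|) ≤ C * ϱ ^ n * (1 - ϱ)⁻¹ := by
      have hle : ∀ k : ℕ, |ρ (n + k)| ≤ C * ϱ ^ n * ϱ ^ k := by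
        intro k
        have := hρC (n + k) (by omega)
        calc |ρ (n + k)| ≤ C * ϱ ^ (n + k) := this
          _ = C * ϱ ^ n * ϱ ^ k := by rw [pow_add]; ring
      calc (∑' k : ℕ, |ρ (n + k)|) ≤ ∑' k : ℕ, C * ϱ ^ n * ϱ ^ k :=
            (summable_tail hρ hn).tsum_le_tsum hle hgs
        _ = C * ϱ ^ n * (1 - ϱ)⁻¹ := by
            rw [tsum_mul_left, tsum_geometric_of_lt_one hϱ0.le hϱ1]
    rw [(hb 0 0 n hn).1]
    calc β ^ 2 * Vn (Gpot ρ) n ≤ β ^ 2 * (2 * ∑' k : ℕ, |ρ (n + k)|) :=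
          mul_le_mul_of_nonneg_left (VnG_le hρ hn) hβ2
      _ ≤ β ^ 2 * (2 * (C * ϱ ^ n * (1 - ϱ)⁻¹)) := by
          refine mul_le_mul_of_nonneg_left ?_ hβ2
          linarith
      _ = 2 * C * β ^ 2 / (1 - ϱ) * ϱ ^ n := by
          field_simp
end
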